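/- arXiv:1104.4396 — 4 statements merged into one kernel-verified Lean document; each statement's English description precedes it below -/
import Mathlib

section
/- Let ψ₁, ψ₂ : (0,1) → ℝ be measurable functions such that ∫₀¹ (x(1−x))^{3/2} ψ_j(x)² dx < ∞ for j = 1, 2. Let G(x,y) be the joint CDF of a pair of uniform(0,1) random variables. Then ∬_{0<x<y<1} |G(x,y) − xy| |ψ₁(x) ψ₂(y)| dx dy is bounded by 2 (∫₀¹ (x(1−x))^{3/2} ψ₁(x)² dx)^{1/2} (∫₀¹ (y(1−y))^{3/2} ψ₂(y)² dy)^{1/2}, and in particular is finite. -/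
open MeasureTheory ProbabilityTheory Set
open scoped ENNReal

private lemma unif_apply {Ω : Type*} [MeasurableSpace Ω] (P : Measure Ω)
    (U : Ω → ℝ) (hU : Measurable U)
    (h : Measure.map U P = volume.restrict (Ioo (0:ℝ) 1)) {x : ℝ} (hx0 : 0 < x) (hx1 : x < 1) :
    P {ω | U ω ≤ x} = ENNReal.ofReal x := by
  have h1 : {ω | U ω ≤ x} = U ⁻¹' (Iic x) := rfl
  rw [h1, ← Measure.map_apply hU measurableSet_Iic, h,
    Measure.restrict_apply measurableSet_Iic]
  have h2 : Iic x ∩ Ioo (0:ℝ) 1 = Ioc 0 x := by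
    ext t
    simp only [mem_inter_iff, mem_Iic, mem_Ioo, mem_Ioc]
    exact ⟨fun ⟨a, b, _⟩ => ⟨b, a⟩, fun ⟨a, b⟩ => ⟨b, a, lt_of_le_of_lt b hx1⟩⟩
  rw [h2, Real.volume_Ioc, sub_zero]

private lemma aux_int1 {x : ℝ} (hx1 : x < 1) :
    ∫⁻ y in Ioo x 1, ENNReal.ofReal ((1-y) ^ (-(1:ℝ)/2))
      = ENNReal.ofReal (2 * (1-x) ^ ((1:ℝ)/2)) := by
  have hii : IntervalIntegrable (fun t : ℝ => t ^ (-(1:ℝ)/2)) volume 0 (1-x) :=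
    intervalIntegral.intervalIntegrable_rpow' (by norm_num)
  have hii2 : IntervalIntegrable (fun y : ℝ => (1-y) ^ (-(1:ℝ)/2)) volume x 1 := by
    have := hii.comp_sub_left 1
    simpa using this.symm
  have hint : IntegrableOn (fun y : ℝ => (1-y) ^ (-(1:ℝ)/2)) (Ioo x 1) :=
    ((intervalIntegrable_iff_integrableOn_Ioc_of_le hx1.le).1 hii2).mono_set
      Ioo_subset_Ioc_self
  rw [← ofReal_integral_eq_lintegral_ofReal hint ?nn]
  case nn =>
    filter_upwards [ae_restrict_mem measurableSet_Ioo] with y hy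
    exact Real.rpow_nonneg (by linarith [hy.2]) _
  congr 1
  have h3 : ∫ y in Ioo x 1, (1-y) ^ (-(1:ℝ)/2) = ∫ y in x..1, (1-y) ^ (-(1:ℝ)/2) := by
    rw [intervalIntegral.integral_of_le hx1.le, integral_Ioc_eq_integral_Ioo]
  rw [h3, intervalIntegral.integral_comp_sub_left (fun t : ℝ => t ^ (-(1:ℝ)/2)) 1]
  norm_num
  rw [integral_rpow (Or.inl (by norm_num))]
  rw [Real.zero_rpow (by norm_num)]
  norm_num
  ring

private lemma aux_int2 {y : ℝ} (hy0 : 0 < y) :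
    ∫⁻ t in Ioo 0 y, ENNReal.ofReal (t ^ (-(1:ℝ)/2)) = ENNReal.ofReal (2 * y ^ ((1:ℝ)/2)) := by
  have hii : IntervalIntegrable (fun t : ℝ => t ^ (-(1:ℝ)/2)) volume 0 y :=
    intervalIntegral.intervalIntegrable_rpow' (by norm_num)
  have hint : IntegrableOn (fun t : ℝ => t ^ (-(1:ℝ)/2)) (Ioo 0 y) :=
    ((intervalIntegrable_iff_integrableOn_Ioc_of_le hy0.le).1 hii).mono_set Ioo_subset_Ioc_self
  rw [← ofReal_integral_eq_lintegral_ofReal hint ?nn]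
  case nn =>
    filter_upwards [ae_restrict_mem measurableSet_Ioo] with t ht
    exact Real.rpow_nonneg ht.1.le _
  congr 1
  have h3 : ∫ t in Ioo 0 y, t ^ (-(1:ℝ)/2) = ∫ t in (0:ℝ)..y, t ^ (-(1:ℝ)/2) := by
    rw [intervalIntegral.integral_of_le hy0.le, integral_Ioc_eq_integral_Ioo]
  rw [h3, integral_rpow (Or.inl (by norm_num)), Real.zero_rpow (by norm_num)]
  norm_num
  ring

private def regionS : Set (ℝ × ℝ) := {p | 0 < p.1 ∧ p.1 < p.2 ∧ p.2 < 1}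

private lemma regionS_meas : MeasurableSet regionS :=
  ((measurableSet_lt measurable_const measurable_fst).inter
    ((measurableSet_lt measurable_fst measurable_snd).inter
      (measurableSet_lt measurable_snd measurable_const)))

private lemma lint_S_prod (u v : ℝ → ℝ≥0∞) (hu : Measurable u) (hv : Measurable v) :
    ∫⁻ p in regionS, u p.1 * v p.2
      = ∫⁻ x in Ioo (0:ℝ) 1, u x * ∫⁻ y in Ioo x 1, v y := by
  have hmeas : Measurable (regionS.indicator (fun p : ℝ × ℝ => u p.1 * v p.2)) :=
    ((hu.comp measurable_fst).mul (hv.comp measurable_snd)).indicator regionS_meas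
  rw [← lintegral_indicator regionS_meas, Measure.volume_eq_prod ℝ ℝ, lintegral_prod _ hmeas.aemeasurable]
  have key : ∀ x : ℝ, (∫⁻ y, (regionS.indicator (fun p : ℝ × ℝ => u p.1 * v p.2)) (x, y))
      = (Ioo (0:ℝ) 1).indicator (fun x => u x * ∫⁻ y in Ioo x 1, v y) x := by
    intro x
    by_cases hx : x ∈ Ioo (0:ℝ) 1
    · rw [indicator_of_mem hx]
      have h1 : ∀ y, regionS.indicator (fun p : ℝ × ℝ => u p.1 * v p.2) (x, y)
          = (Ioo x 1).indicator (fun y => u x * v y) y := by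
        intro y
        by_cases hy : y ∈ Ioo x 1
        · rw [indicator_of_mem hy, indicator_of_mem]
          exact ⟨hx.1, hy.1, hy.2⟩
        · rw [indicator_of_notMem hy, indicator_of_notMem]
          intro hmem
          exact hy ⟨hmem.2.1, hmem.2.2⟩
      simp_rw [h1]
      rw [lintegral_indicator measurableSet_Ioo, lintegral_const_mul _ hv]
    · rw [indicator_of_notMem hx]
      have h1 : ∀ y, regionS.indicator (fun p : ℝ × ℝ => u p.1 * v p.2) (x, y) = 0 := by
        intro y
        rw [indicator_of_notMem]
        intro hmem
        exact hx ⟨hmem.1, hmem.2.1.trans hmem.2.2⟩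
      simp_rw [h1]
      exact lintegral_zero
  simp_rw [key]
  rw [lintegral_indicator measurableSet_Ioo]

private lemma lint_S_prod' (u v : ℝ → ℝ≥0∞) (hu : Measurable u) (hv : Measurable v) :
    ∫⁻ p in regionS, u p.1 * v p.2
      = ∫⁻ y in Ioo (0:ℝ) 1, v y * ∫⁻ x in Ioo 0 y, u x := by
  have hmeas : Measurable (regionS.indicator (fun p : ℝ × ℝ => u p.1 * v p.2)) :=
    ((hu.comp measurable_fst).mul (hv.comp measurable_snd)).indicator regionS_meas
  rw [← lintegral_indicator regionS_meas, Measure.volume_eq_prod ℝ ℝ,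
    lintegral_prod_symm _ hmeas.aemeasurable]
  have key : ∀ y : ℝ, (∫⁻ x, (regionS.indicator (fun p : ℝ × ℝ => u p.1 * v p.2)) (x, y))
      = (Ioo (0:ℝ) 1).indicator (fun y => v y * ∫⁻ x in Ioo 0 y, u x) y := by
    intro y
    by_cases hy : y ∈ Ioo (0:ℝ) 1
    · rw [indicator_of_mem hy]
      have h1 : ∀ x, regionS.indicator (fun p : ℝ × ℝ => u p.1 * v p.2) (x, y)
          = (Ioo (0:ℝ) y).indicator (fun x => v y * u x) x := by
        intro x
        by_cases hx : x ∈ Ioo (0:ℝ) y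
        · rw [indicator_of_mem hx, indicator_of_mem]
          · exact mul_comm (u x) (v y)
          · exact ⟨hx.1, hx.2, hy.2⟩
        · rw [indicator_of_notMem hx, indicator_of_notMem]
          intro hmem
          exact hx ⟨hmem.1, hmem.2.1⟩
      simp_rw [h1]
      rw [lintegral_indicator measurableSet_Ioo, lintegral_const_mul _ hu]
    · rw [indicator_of_notMem hy]
      have h1 : ∀ x, regionS.indicator (fun p : ℝ × ℝ => u p.1 * v p.2) (x, y) = 0 := by
        intro x
        rw [indicator_of_notMem]
        intro hmem
        exact hy ⟨hmem.1.trans hmem.2.1, hmem.2.2⟩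
      simp_rw [h1]
      exact lintegral_zero
  simp_rw [key]
  rw [lintegral_indicator measurableSet_Ioo]

private noncomputable def fAux (ψ : ℝ → ℝ) (p : ℝ × ℝ) : ℝ≥0∞ :=
  ENNReal.ofReal (Real.sqrt (p.1*(1-p.1)) * |ψ p.1|) * ENNReal.ofReal p.1 ^ ((1:ℝ)/4)
    * ENNReal.ofReal (1-p.2) ^ (-((1:ℝ)/4))

private noncomputable def gAux (ψ : ℝ → ℝ) (p : ℝ × ℝ) : ℝ≥0∞ :=
  ENNReal.ofReal (Real.sqrt (p.2*(1-p.2)) * |ψ p.2|) * ENNReal.ofReal (1-p.2) ^ ((1:ℝ)/4)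
    * ENNReal.ofReal p.1 ^ (-((1:ℝ)/4))

private lemma fAux_meas {ψ : ℝ → ℝ} (hψ : Measurable ψ) : Measurable (fAux ψ) := by
  apply Measurable.mul
  apply Measurable.mul
  · exact (((measurable_fst.mul (measurable_const.sub measurable_fst)).sqrt).mul
      ((hψ.comp measurable_fst).abs)).ennreal_ofReal
  · exact (measurable_fst.ennreal_ofReal).pow_const _
  · exact ((measurable_const.sub measurable_snd).ennreal_ofReal).pow_const _

private lemma gAux_meas {ψ : ℝ → ℝ} (hψ : Measurable ψ) : Measurable (gAux ψ) := by
  apply Measurable.mul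
  apply Measurable.mul
  · exact (((measurable_snd.mul (measurable_const.sub measurable_snd)).sqrt).mul
      ((hψ.comp measurable_snd).abs)).ennreal_ofReal
  · exact ((measurable_const.sub measurable_snd).ennreal_ofReal).pow_const _
  · exact (measurable_fst.ennreal_ofReal).pow_const _

private lemma fg_mul (ψ₁ ψ₂ : ℝ → ℝ) {p : ℝ × ℝ} (hp : p ∈ regionS) :
    fAux ψ₁ p * gAux ψ₂ p
      = ENNReal.ofReal ((Real.sqrt (p.1*(1-p.1)) * |ψ₁ p.1|)
          * (Real.sqrt (p.2*(1-p.2)) * |ψ₂ p.2|)) := by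
  obtain ⟨hx, hxy, hy⟩ := hp
  have ha0 : ENNReal.ofReal p.1 ≠ 0 := by
    simp only [ne_eq, ENNReal.ofReal_eq_zero, not_le]; exact hx
  have hb0 : ENNReal.ofReal (1-p.2) ≠ 0 := by
    simp only [ne_eq, ENNReal.ofReal_eq_zero, not_le]; linarith
  have haa : ENNReal.ofReal p.1 ^ ((1:ℝ)/4) * ENNReal.ofReal p.1 ^ (-((1:ℝ)/4)) = 1 := by
    rw [← ENNReal.rpow_add _ _ ha0 ENNReal.ofReal_ne_top]
    norm_num
  have hbb : ENNReal.ofReal (1-p.2) ^ ((1:ℝ)/4)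
      * ENNReal.ofReal (1-p.2) ^ (-((1:ℝ)/4)) = 1 := by
    rw [← ENNReal.rpow_add _ _ hb0 ENNReal.ofReal_ne_top]
    norm_num
  rw [ENNReal.ofReal_mul (by positivity)]
  calc fAux ψ₁ p * gAux ψ₂ p
      = ENNReal.ofReal (Real.sqrt (p.1*(1-p.1)) * |ψ₁ p.1|)
          * ENNReal.ofReal (Real.sqrt (p.2*(1-p.2)) * |ψ₂ p.2|)
          * (ENNReal.ofReal p.1 ^ ((1:ℝ)/4) * ENNReal.ofReal p.1 ^ (-((1:ℝ)/4)))
          * (ENNReal.ofReal (1-p.2) ^ ((1:ℝ)/4)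
              * ENNReal.ofReal (1-p.2) ^ (-((1:ℝ)/4))) := by
        simp only [fAux, gAux]; ring
    _ = _ := by rw [haa, hbb, mul_one, mul_one]

private lemma fAux_sq (ψ : ℝ → ℝ) {p : ℝ × ℝ} (hx : 0 < p.1) (hx1 : p.1 < 1) (hy1 : p.2 < 1) :
    fAux ψ p ^ (2:ℝ)
      = ENNReal.ofReal (p.1*(1-p.1) * ψ p.1^2 * p.1 ^ ((1:ℝ)/2))
          * ENNReal.ofReal ((1-p.2) ^ (-(1:ℝ)/2)) := by
  have h1 : (0:ℝ) ≤ p.1 * (1-p.1) := by nlinarith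
  rw [fAux, ENNReal.rpow_two, mul_pow, mul_pow]
  have e1 : ENNReal.ofReal (Real.sqrt (p.1*(1-p.1)) * |ψ p.1|) ^ 2
      = ENNReal.ofReal (p.1*(1-p.1) * ψ p.1 ^ 2) := by
    rw [← ENNReal.ofReal_pow (by positivity), mul_pow, Real.sq_sqrt h1, sq_abs]
  have e2 : (ENNReal.ofReal p.1 ^ ((1:ℝ)/4)) ^ 2 = ENNReal.ofReal (p.1 ^ ((1:ℝ)/2)) := by
    rw [← ENNReal.rpow_natCast (ENNReal.ofReal p.1 ^ ((1:ℝ)/4)) 2, ← ENNReal.rpow_mul,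
      show (1:ℝ)/4 * ((2:ℕ):ℝ) = (1:ℝ)/2 by push_cast; ring,
      ENNReal.ofReal_rpow_of_pos hx]
  have e3 : (ENNReal.ofReal (1-p.2) ^ (-((1:ℝ)/4))) ^ 2
      = ENNReal.ofReal ((1-p.2) ^ (-(1:ℝ)/2)) := by
    rw [← ENNReal.rpow_natCast (ENNReal.ofReal (1-p.2) ^ (-((1:ℝ)/4))) 2, ← ENNReal.rpow_mul,
      show -((1:ℝ)/4) * ((2:ℕ):ℝ) = -(1:ℝ)/2 by push_cast; ring,
      ENNReal.ofReal_rpow_of_pos (by linarith)]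
  rw [e1, e2, e3, ← ENNReal.ofReal_mul (mul_nonneg h1 (sq_nonneg _))]

private lemma gAux_sq (ψ : ℝ → ℝ) {p : ℝ × ℝ} (hx : 0 < p.1) (hy0 : 0 < p.2) (hy1 : p.2 < 1) :
    gAux ψ p ^ (2:ℝ)
      = ENNReal.ofReal (p.1 ^ (-(1:ℝ)/2))
          * ENNReal.ofReal (p.2*(1-p.2) * ψ p.2^2 * (1-p.2) ^ ((1:ℝ)/2)) := by
  have h1 : (0:ℝ) ≤ p.2 * (1-p.2) := by nlinarith
  rw [gAux, ENNReal.rpow_two, mul_pow, mul_pow]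
  have e1 : ENNReal.ofReal (Real.sqrt (p.2*(1-p.2)) * |ψ p.2|) ^ 2
      = ENNReal.ofReal (p.2*(1-p.2) * ψ p.2 ^ 2) := by
    rw [← ENNReal.ofReal_pow (by positivity), mul_pow, Real.sq_sqrt h1, sq_abs]
  have e2 : (ENNReal.ofReal (1-p.2) ^ ((1:ℝ)/4)) ^ 2
      = ENNReal.ofReal ((1-p.2) ^ ((1:ℝ)/2)) := by
    rw [← ENNReal.rpow_natCast (ENNReal.ofReal (1-p.2) ^ ((1:ℝ)/4)) 2, ← ENNReal.rpow_mul,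
      show (1:ℝ)/4 * ((2:ℕ):ℝ) = (1:ℝ)/2 by push_cast; ring,
      ENNReal.ofReal_rpow_of_pos (by linarith)]
  have e3 : (ENNReal.ofReal p.1 ^ (-((1:ℝ)/4))) ^ 2 = ENNReal.ofReal (p.1 ^ (-(1:ℝ)/2)) := by
    rw [← ENNReal.rpow_natCast (ENNReal.ofReal p.1 ^ (-((1:ℝ)/4))) 2, ← ENNReal.rpow_mul,
      show -((1:ℝ)/4) * ((2:ℕ):ℝ) = -(1:ℝ)/2 by push_cast; ring,
      ENNReal.ofReal_rpow_of_pos hx]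
  rw [e1, e2, e3, ← ENNReal.ofReal_mul (mul_nonneg h1 (sq_nonneg _))]
  ring

private lemma rpow_halves {x : ℝ} (hx0 : 0 < x) (hx1 : x < 1) :
    (x*(1-x)) ^ ((3:ℝ)/2) = (x*(1-x)) * (x ^ ((1:ℝ)/2) * (1-x) ^ ((1:ℝ)/2)) := by
  rw [show (3:ℝ)/2 = 1 + 1/2 by norm_num, Real.rpow_add (by nlinarith), Real.rpow_one,
    Real.mul_rpow hx0.le (by linarith)]

private lemma lint_f_sq (ψ : ℝ → ℝ) (hψ : Measurable ψ)
    (hint : IntegrableOn (fun x => (x * (1 - x)) ^ ((3:ℝ)/2) * (ψ x) ^ 2) (Ioo (0:ℝ) 1)) :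
    ∫⁻ p in regionS, fAux ψ p ^ (2:ℝ)
      = ENNReal.ofReal (2 * ∫ x in Ioo (0:ℝ) 1, (x * (1 - x)) ^ ((3:ℝ)/2) * (ψ x) ^ 2) := by
  set u : ℝ → ℝ≥0∞ := fun x => ENNReal.ofReal (x*(1-x) * ψ x^2 * x ^ ((1:ℝ)/2)) with hu_def
  set v : ℝ → ℝ≥0∞ := fun y => ENNReal.ofReal ((1-y) ^ (-(1:ℝ)/2)) with hv_def
  have hu : Measurable u :=
    (((measurable_id.mul (measurable_const.sub measurable_id)).mul (hψ.pow_const 2)).mul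
      (measurable_id.pow_const _)).ennreal_ofReal
  have hv : Measurable v :=
    ((measurable_const.sub measurable_id).pow_const _).ennreal_ofReal
  have step1 : ∫⁻ p in regionS, fAux ψ p ^ (2:ℝ) = ∫⁻ p in regionS, u p.1 * v p.2 :=
    setLIntegral_congr_fun regionS_meas (fun p hp =>
      fAux_sq ψ hp.1 (hp.2.1.trans hp.2.2) hp.2.2)
  rw [step1, lint_S_prod u v hu hv]
  have step2 : ∫⁻ x in Ioo (0:ℝ) 1, u x * ∫⁻ y in Ioo x 1, v y
      = ∫⁻ x in Ioo (0:ℝ) 1,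
          ENNReal.ofReal (2 * ((x * (1 - x)) ^ ((3:ℝ)/2) * (ψ x) ^ 2)) := by
    apply setLIntegral_congr_fun measurableSet_Ioo
    intro x hx
    beta_reduce
    rw [hv_def, hu_def, aux_int1 hx.2, ← ENNReal.ofReal_mul
      (mul_nonneg (mul_nonneg (by nlinarith [hx.1, hx.2] : (0:ℝ) ≤ x*(1-x)) (sq_nonneg _))
        (Real.rpow_nonneg hx.1.le _))]
    congr 1
    rw [rpow_halves hx.1 hx.2]
    ring
  rw [step2, ← ofReal_integral_eq_lintegral_ofReal (hint.const_mul 2) ?nn]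
  case nn =>
    filter_upwards [ae_restrict_mem measurableSet_Ioo] with x hx
    exact mul_nonneg (by norm_num)
      (mul_nonneg (Real.rpow_nonneg (by nlinarith [hx.1, hx.2]) _) (sq_nonneg _))
  rw [MeasureTheory.integral_const_mul]

private lemma lint_g_sq (ψ : ℝ → ℝ) (hψ : Measurable ψ)
    (hint : IntegrableOn (fun x => (x * (1 - x)) ^ ((3:ℝ)/2) * (ψ x) ^ 2) (Ioo (0:ℝ) 1)) :
    ∫⁻ p in regionS, gAux ψ p ^ (2:ℝ)
      = ENNReal.ofReal (2 * ∫ x in Ioo (0:ℝ) 1, (x * (1 - x)) ^ ((3:ℝ)/2) * (ψ x) ^ 2) := by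
  set u : ℝ → ℝ≥0∞ := fun x => ENNReal.ofReal (x ^ (-(1:ℝ)/2)) with hu_def
  set v : ℝ → ℝ≥0∞ := fun y => ENNReal.ofReal (y*(1-y) * ψ y^2 * (1-y) ^ ((1:ℝ)/2)) with hv_def
  have hu : Measurable u := (measurable_id.pow_const _).ennreal_ofReal
  have hv : Measurable v :=
    (((measurable_id.mul (measurable_const.sub measurable_id)).mul (hψ.pow_const 2)).mul
      ((measurable_const.sub measurable_id).pow_const _)).ennreal_ofReal
  have step1 : ∫⁻ p in regionS, gAux ψ p ^ (2:ℝ) = ∫⁻ p in regionS, u p.1 * v p.2 :=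
    setLIntegral_congr_fun regionS_meas (fun p hp =>
      gAux_sq ψ hp.1 (hp.1.trans hp.2.1) hp.2.2)
  rw [step1, lint_S_prod' u v hu hv]
  have step2 : ∫⁻ y in Ioo (0:ℝ) 1, v y * ∫⁻ x in Ioo 0 y, u x
      = ∫⁻ y in Ioo (0:ℝ) 1,
          ENNReal.ofReal (2 * ((y * (1 - y)) ^ ((3:ℝ)/2) * (ψ y) ^ 2)) := by
    apply setLIntegral_congr_fun measurableSet_Ioo
    intro y hy
    beta_reduce
    rw [hv_def, hu_def, aux_int2 hy.1, ← ENNReal.ofReal_mul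
      (mul_nonneg (mul_nonneg (by nlinarith [hy.1, hy.2] : (0:ℝ) ≤ y*(1-y)) (sq_nonneg _))
        (Real.rpow_nonneg (by linarith [hy.2] : (0:ℝ) ≤ 1-y) _))]
    congr 1
    rw [rpow_halves hy.1 hy.2]
    ring
  rw [step2, ← ofReal_integral_eq_lintegral_ofReal (hint.const_mul 2) ?nn]
  case nn =>
    filter_upwards [ae_restrict_mem measurableSet_Ioo] with x hx
    exact mul_nonneg (by norm_num)
      (mul_nonneg (Real.rpow_nonneg (by nlinarith [hx.1, hx.2]) _) (sq_nonneg _))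
  rw [MeasureTheory.integral_const_mul]


/-- Cauchy–Schwarz bound for `∬_{0<x<y<1} |G(x,y)−xy| |ψ₁(x)ψ₂(y)| dx dy`, where `G` is the
joint CDF of a pair of uniform(0,1) random variables and the `ψⱼ` satisfy the weighted
square-integrability condition `∫₀¹ (x(1−x))^{3/2} ψⱼ(x)² dx < ∞`. In particular the
double integral is finite. -/
theorem copula_weighted_integral_bound
    {Ω : Type*} [MeasurableSpace Ω] (P : Measure Ω) [IsProbabilityMeasure P]
    (U V : Ω → ℝ) (hUmeas : Measurable U) (hVmeas : Measurable V)
    (hUunif : Measure.map U P = volume.restrict (Ioo (0:ℝ) 1))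
    (hVunif : Measure.map V P = volume.restrict (Ioo (0:ℝ) 1))
    (G : ℝ → ℝ → ℝ)
    (hG : ∀ x y, G x y = (P {ω | U ω ≤ x ∧ V ω ≤ y}).toReal)
    (ψ₁ ψ₂ : ℝ → ℝ) (hψ₁ : Measurable ψ₁) (hψ₂ : Measurable ψ₂)
    (hint₁ : IntegrableOn (fun x => (x * (1 - x)) ^ ((3:ℝ)/2) * (ψ₁ x) ^ 2) (Ioo (0:ℝ) 1))
    (hint₂ : IntegrableOn (fun x => (x * (1 - x)) ^ ((3:ℝ)/2) * (ψ₂ x) ^ 2) (Ioo (0:ℝ) 1)) :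
    ∫⁻ p in {p : ℝ × ℝ | 0 < p.1 ∧ p.1 < p.2 ∧ p.2 < 1},
        ENNReal.ofReal (|G p.1 p.2 - p.1 * p.2| * |ψ₁ p.1 * ψ₂ p.2|)
      ≤ ENNReal.ofReal
          (2 * (∫ x in Ioo (0:ℝ) 1, (x * (1 - x)) ^ ((3:ℝ)/2) * (ψ₁ x) ^ 2) ^ ((1:ℝ)/2)
             * (∫ y in Ioo (0:ℝ) 1, (y * (1 - y)) ^ ((3:ℝ)/2) * (ψ₂ y) ^ 2) ^ ((1:ℝ)/2)) := by
  -- pointwise covariance-type bound from the Fréchet–Hoeffding inequalities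
  have key : ∀ x y : ℝ, 0 < x → x < y → y < 1 →
      |G x y - x * y| ≤ Real.sqrt (x*(1-x)) * Real.sqrt (y*(1-y)) := by
    intro x y hx hxy hy1
    have hx1 : x < 1 := hxy.trans hy1
    have hy0 : 0 < y := hx.trans hxy
    set A := {ω | U ω ≤ x} with hA_def
    set B := {ω | V ω ≤ y} with hB_def
    have hB : MeasurableSet B := hVmeas measurableSet_Iic
    have hPA : P A = ENNReal.ofReal x := unif_apply P U hUmeas hUunif hx hx1
    have hPB : P B = ENNReal.ofReal y := unif_apply P V hVmeas hVunif hy0 hy1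
    have hset : {ω | U ω ≤ x ∧ V ω ≤ y} = A ∩ B := rfl
    set r := (P (A ∩ B)).toReal with hr_def
    have hGr : G x y = r := by rw [hG, hset]
    have hr0 : 0 ≤ r := ENNReal.toReal_nonneg
    have hrx : r ≤ x := by
      have hm := measure_mono (μ := P) (inter_subset_left : A ∩ B ⊆ A)
      rw [hPA] at hm
      calc r ≤ (ENNReal.ofReal x).toReal :=
            ENNReal.toReal_mono ENNReal.ofReal_ne_top hm
        _ = x := ENNReal.toReal_ofReal hx.le
    have hry : r ≤ y := by
      have hm := measure_mono (μ := P) (inter_subset_right : A ∩ B ⊆ B)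
      rw [hPB] at hm
      calc r ≤ (ENNReal.ofReal y).toReal :=
            ENNReal.toReal_mono ENNReal.ofReal_ne_top hm
        _ = y := ENNReal.toReal_ofReal hy0.le
    have hlb : x + y - 1 ≤ r := by
      have h1 : P A + P B = P (A ∪ B) + P (A ∩ B) := (measure_union_add_inter (μ := P) A hB).symm
      have h2 : P (A ∪ B) ≤ 1 := prob_le_one
      have h3 : ENNReal.ofReal x + ENNReal.ofReal y ≤ 1 + P (A ∩ B) := by
        rw [← hPA, ← hPB, h1]
        exact add_le_add_left h2 _
      have h4 := ENNReal.toReal_mono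
        (by finiteness : (1:ℝ≥0∞) + P (A ∩ B) ≠ ⊤) h3
      rw [ENNReal.toReal_add ENNReal.ofReal_ne_top ENNReal.ofReal_ne_top,
        ENNReal.toReal_add ENNReal.one_ne_top (measure_ne_top P _),
        ENNReal.toReal_ofReal hx.le, ENNReal.toReal_ofReal hy0.le,
        ENNReal.toReal_one] at h4
      linarith
    have hsq : |r - x*y|^2 ≤ (x*(1-x)) * (y*(1-y)) := by
      rcases le_or_gt (x*y) r with h | h
      · rw [abs_of_nonneg (by linarith)]
        have e1 : r - x*y ≤ x*(1-y) := by nlinarith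
        have e2 : r - x*y ≤ y*(1-x) := by nlinarith
        nlinarith [mul_le_mul e1 e2 (by linarith) (by nlinarith)]
      · rw [abs_of_neg (by linarith)]
        have e1 : x*y - r ≤ x*y := by linarith
        have e2 : x*y - r ≤ (1-x)*(1-y) := by nlinarith
        nlinarith [mul_le_mul e1 e2 (by linarith) (by positivity)]
    rw [hGr]
    calc |r - x*y| = Real.sqrt (|r - x*y|^2) := (Real.sqrt_sq_eq_abs _).symm.trans
          (by rw [sq_abs, Real.sqrt_sq_eq_abs])
      _ ≤ Real.sqrt ((x*(1-x)) * (y*(1-y))) := Real.sqrt_le_sqrt hsq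
      _ = Real.sqrt (x*(1-x)) * Real.sqrt (y*(1-y)) := Real.sqrt_mul (by nlinarith) _
  -- notation
  set I₁ := ∫ x in Ioo (0:ℝ) 1, (x * (1 - x)) ^ ((3:ℝ)/2) * (ψ₁ x) ^ 2 with hI₁_def
  set I₂ := ∫ y in Ioo (0:ℝ) 1, (y * (1 - y)) ^ ((3:ℝ)/2) * (ψ₂ y) ^ 2 with hI₂_def
  have hI₁ : 0 ≤ I₁ := setIntegral_nonneg measurableSet_Ioo fun x hx =>
    mul_nonneg (Real.rpow_nonneg (by nlinarith [hx.1, hx.2]) _) (sq_nonneg _)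
  have hI₂ : 0 ≤ I₂ := setIntegral_nonneg measurableSet_Ioo fun x hx =>
    mul_nonneg (Real.rpow_nonneg (by nlinarith [hx.1, hx.2]) _) (sq_nonneg _)
  have hS : MeasurableSet {p : ℝ × ℝ | 0 < p.1 ∧ p.1 < p.2 ∧ p.2 < 1} := regionS_meas
  -- step A : bound by the product fAux * gAux
  have stepA : ∫⁻ p in {p : ℝ × ℝ | 0 < p.1 ∧ p.1 < p.2 ∧ p.2 < 1},
      ENNReal.ofReal (|G p.1 p.2 - p.1 * p.2| * |ψ₁ p.1 * ψ₂ p.2|)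
      ≤ ∫⁻ p in regionS, (fAux ψ₁ * gAux ψ₂) p := by
    apply setLIntegral_mono ((fAux_meas hψ₁).mul (gAux_meas hψ₂))
    rintro p ⟨hx, hxy, hy⟩
    have hkey := key p.1 p.2 hx hxy hy
    show _ ≤ fAux ψ₁ p * gAux ψ₂ p
    rw [fg_mul ψ₁ ψ₂ ⟨hx, hxy, hy⟩]
    apply ENNReal.ofReal_le_ofReal
    calc |G p.1 p.2 - p.1 * p.2| * |ψ₁ p.1 * ψ₂ p.2|
        ≤ (Real.sqrt (p.1*(1-p.1)) * Real.sqrt (p.2*(1-p.2))) * |ψ₁ p.1 * ψ₂ p.2| :=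
          mul_le_mul_of_nonneg_right hkey (abs_nonneg _)
      _ = (Real.sqrt (p.1*(1-p.1)) * |ψ₁ p.1|) * (Real.sqrt (p.2*(1-p.2)) * |ψ₂ p.2|) := by
          rw [abs_mul]; ring
  -- step B : Cauchy–Schwarz
  have hconj : Real.HolderConjugate 2 2 := Real.HolderConjugate.two_two
  have stepB := ENNReal.lintegral_mul_le_Lp_mul_Lq (volume.restrict regionS) hconj
    (fAux_meas hψ₁).aemeasurable (gAux_meas hψ₂).aemeasurable
  rw [lint_f_sq ψ₁ hψ₁ hint₁, lint_g_sq ψ₂ hψ₂ hint₂] at stepB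
  refine le_trans (stepA.trans stepB) ?_
  -- final computation
  rw [ENNReal.ofReal_rpow_of_nonneg (by linarith) (by norm_num),
    ENNReal.ofReal_rpow_of_nonneg (by linarith) (by norm_num),
    ← ENNReal.ofReal_mul (Real.rpow_nonneg (by linarith) _)]
  apply ENNReal.ofReal_le_ofReal
  rw [Real.mul_rpow (by norm_num) hI₁, Real.mul_rpow (by norm_num) hI₂]
  have h2 : (2:ℝ) ^ ((1:ℝ)/2) * (2:ℝ) ^ ((1:ℝ)/2) = 2 := by
    rw [← Real.rpow_add (by norm_num)]
    norm_num
  have heq : (2:ℝ) ^ ((1:ℝ)/2) * I₁ ^ ((1:ℝ)/2) * ((2:ℝ) ^ ((1:ℝ)/2) * I₂ ^ ((1:ℝ)/2))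
      = 2 * I₁ ^ ((1:ℝ)/2) * I₂ ^ ((1:ℝ)/2) := by
    linear_combination (I₁ ^ ((1:ℝ)/2) * I₂ ^ ((1:ℝ)/2)) * h2
  exact heq.le
end

section
/- Let γ : (0,1) → ℝ be continuously differentiable with ∫₀¹ (x(1−x))^{3/2} (γ'(x))² dx < ∞ and γ Riemann integrable on (0,1). Then (1/√n) ∑_{i=1}^n γ(i/(n+1)) − √n ∫₀¹ γ(x) dx → 0 as n → ∞. -/
open MeasureTheory Set Filter Topology

lemma RSQC_winv_le (x : ℝ) (hx : x ∈ Ioo (0:ℝ) 1) :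
    ((x * (1 - x)) ^ ((3:ℝ)/2))⁻¹ ≤ 4 * x ^ (-(3/2) : ℝ) + 4 * (1 - x) ^ (-(3/2) : ℝ) := by
  obtain ⟨hx0, hx1⟩ := hx
  have h1 : 0 < 1 - x := by linarith
  have key : ∀ y z : ℝ, 0 < y → 0 < z → y / 2 ≤ y * z →
      ((y * z) ^ ((3:ℝ)/2))⁻¹ ≤ 4 * y ^ (-(3/2) : ℝ) := by
    intro y z hy hz hle
    have h2 : (y / 2) ^ ((3:ℝ)/2) ≤ (y * z) ^ ((3:ℝ)/2) :=
      Real.rpow_le_rpow (by positivity) hle (by norm_num)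
    have h3 : (y/2) ^ ((3:ℝ)/2) = y ^ ((3:ℝ)/2) * (1/2 : ℝ) ^ ((3:ℝ)/2) := by
      rw [div_eq_mul_inv, Real.mul_rpow hy.le (by norm_num)]
      norm_num
    have h4 : ((1:ℝ)/2) ^ ((2:ℝ)) ≤ ((1:ℝ)/2) ^ ((3:ℝ)/2) :=
      Real.rpow_le_rpow_of_exponent_ge (by norm_num) (by norm_num) (by norm_num)
    have h5 : ((1:ℝ)/2) ^ ((2:ℝ)) = 1/4 := by
      rw [show ((2:ℝ)) = ((2:ℕ):ℝ) by norm_num, Real.rpow_natCast]; norm_num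
    have hy32 : 0 < y ^ ((3:ℝ)/2) := Real.rpow_pos_of_pos hy _
    have h6 : y ^ ((3:ℝ)/2) * (1/4 : ℝ) ≤ (y*z) ^ ((3:ℝ)/2) := by
      calc y ^ ((3:ℝ)/2) * (1/4:ℝ) ≤ y ^ ((3:ℝ)/2) * (1/2:ℝ)^((3:ℝ)/2) := by
            have := h5 ▸ h4; nlinarith
        _ = (y/2) ^ ((3:ℝ)/2) := h3.symm
        _ ≤ _ := h2
    have h7 : ((y*z) ^ ((3:ℝ)/2))⁻¹ ≤ (y ^ ((3:ℝ)/2) * (1/4:ℝ))⁻¹ := by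
      apply inv_anti₀ (by positivity) h6
    rw [Real.rpow_neg hy.le]
    calc ((y*z) ^ ((3:ℝ)/2))⁻¹ ≤ (y ^ ((3:ℝ)/2) * (1/4:ℝ))⁻¹ := h7
      _ = 4 * (y ^ ((3:ℝ)/2))⁻¹ := by rw [mul_inv]; ring
  rcases le_total x (1/2) with hc | hc
  · have := key x (1-x) hx0 h1 (by nlinarith)
    have hpos : 0 ≤ 4 * (1-x) ^ (-(3/2):ℝ) := by positivity
    linarith
  · have := key (1-x) x h1 hx0 (by nlinarith)
    rw [mul_comm (1-x) x] at this
    have hpos : 0 ≤ 4 * x ^ (-(3/2):ℝ) := by positivity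
    linarith

lemma RSQC_amgm (w u ε : ℝ) (hw : 0 < w) (hε : 0 < ε) :
    |u| ≤ (ε * (w * u^2) + ε⁻¹ * w⁻¹) / 2 := by
  set s := Real.sqrt (ε * w) with hs
  have hsp : 0 < s := Real.sqrt_pos.mpr (by positivity)
  have hs2 : s ^ 2 = ε * w := Real.sq_sqrt (by positivity)
  have h := two_mul_le_add_sq (s * |u|) s⁻¹
  have h1 : 2 * (s * |u|) * s⁻¹ = 2 * |u| := by field_simp
  have h2 : (s * |u|)^2 = ε * w * u^2 := by rw [mul_pow, hs2, sq_abs]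
  have h3 : (s⁻¹)^2 = ε⁻¹ * w⁻¹ := by rw [← mul_inv, ← hs2, sq, sq, mul_inv]
  rw [h1, h2, h3] at h
  linarith

lemma RSQC_gii (γ : ℝ → ℝ) (hγint : IntegrableOn γ (Ioo (0:ℝ) 1))
    {u v : ℝ} (hu0 : 0 ≤ u) (hu1 : u ≤ 1) (hv0 : 0 ≤ v) (hv1 : v ≤ 1) :
    IntervalIntegrable γ volume u v := by
  rw [intervalIntegrable_iff]
  exact ((integrableOn_Ioc_iff_integrableOn_Ioo (f := γ)).mpr hγint).mono_set
    (by rw [Set.uIoc]; exact Set.Ioc_subset_Ioc (le_min hu0 hv0) (max_le hu1 hv1))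

lemma RSQC_sub_Ioo {u v : ℝ} (hu0 : 0 < u) (hu1 : u < 1) (hv0 : 0 < v) (hv1 : v < 1) :
    Set.uIcc u v ⊆ Ioo (0:ℝ) 1 := by
  rw [Set.uIcc_eq_union]
  rintro x (⟨h1,h2⟩|⟨h1,h2⟩)
  · exact ⟨lt_of_lt_of_le hu0 h1, lt_of_le_of_lt h2 hv1⟩
  · exact ⟨lt_of_lt_of_le hv0 h1, lt_of_le_of_lt h2 hu1⟩

lemma RSQC_g'ii (γ' : ℝ → ℝ) (hcont : ContinuousOn γ' (Ioo (0:ℝ) 1))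
    {u v : ℝ} (hu0 : 0 < u) (hu1 : u < 1) (hv0 : 0 < v) (hv1 : v < 1) :
    IntervalIntegrable γ' volume u v :=
  (hcont.mono (RSQC_sub_Ioo hu0 hu1 hv0 hv1)).intervalIntegrable

lemma RSQC_absint_bound (γ' : ℝ → ℝ) (hcont : ContinuousOn γ' (Ioo (0:ℝ) 1))
    (hint : IntegrableOn (fun x => (x * (1 - x)) ^ ((3:ℝ)/2) * (γ' x) ^ 2) (Ioo (0:ℝ) 1))
    {a b : ℝ} (ha : 0 < a) (hab : a ≤ b) (hb : b < 1) {ε : ℝ} (hε : 0 < ε) :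
    ∫ x in a..b, |γ' x| ≤
      (ε * (∫ x in Ioo (0:ℝ) 1, (x * (1 - x)) ^ ((3:ℝ)/2) * (γ' x) ^ 2)
        + ε⁻¹ * (8 * a ^ (-(1/2) : ℝ) + 8 * (1 - b) ^ (-(1/2) : ℝ))) / 2 := by
  have ha1 : a < 1 := lt_of_le_of_lt hab hb
  have hb0 : 0 < b := lt_of_lt_of_le ha hab
  have hIccsub : Icc a b ⊆ Ioo (0:ℝ) 1 := fun x ⟨h1, h2⟩ =>
    ⟨lt_of_lt_of_le ha h1, lt_of_le_of_lt h2 hb⟩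
  -- integrability of the pieces on [a,b]
  have hcw : ContinuousOn (fun x : ℝ => (x * (1 - x)) ^ ((3:ℝ)/2) * (γ' x) ^ 2) (Icc a b) := by
    apply ContinuousOn.mul
    · apply ContinuousOn.rpow_const
      · fun_prop
      · intro x hx
        right; norm_num
    · exact ((hcont.mono hIccsub).pow 2)
  have hIw : IntervalIntegrable (fun x : ℝ => (x * (1 - x)) ^ ((3:ℝ)/2) * (γ' x) ^ 2)
      volume a b := (hcw.mono (by rw [Set.uIcc_of_le hab])).intervalIntegrable
  have hc2 : ContinuousOn (fun x : ℝ => x ^ (-(3/2) : ℝ)) (Icc a b) := by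
    apply ContinuousOn.rpow_const (by fun_prop)
    intro x hx
    exact Or.inl (ne_of_gt (lt_of_lt_of_le ha hx.1))
  have hI2 : IntervalIntegrable (fun x : ℝ => x ^ (-(3/2) : ℝ)) volume a b :=
    (hc2.mono (by rw [Set.uIcc_of_le hab])).intervalIntegrable
  have hc3 : ContinuousOn (fun x : ℝ => (1-x) ^ (-(3/2) : ℝ)) (Icc a b) := by
    apply ContinuousOn.rpow_const (by fun_prop)
    intro x hx
    exact Or.inl (ne_of_gt (by linarith [hx.2, lt_of_le_of_lt hx.2 hb] : (0:ℝ) < 1 - x))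
  have hI3 : IntervalIntegrable (fun x : ℝ => (1-x) ^ (-(3/2) : ℝ)) volume a b :=
    (hc3.mono (by rw [Set.uIcc_of_le hab])).intervalIntegrable
  have hIabs : IntervalIntegrable (fun x => |γ' x|) volume a b :=
    ((hcont.mono (RSQC_sub_Ioo ha ha1 hb0 hb)).abs).intervalIntegrable
  -- pointwise bound
  have hptw : ∀ x ∈ Icc a b, |γ' x| ≤
      (ε * ((x * (1 - x)) ^ ((3:ℝ)/2) * (γ' x) ^ 2)
        + ε⁻¹ * (4 * x ^ (-(3/2) : ℝ) + 4 * (1-x) ^ (-(3/2) : ℝ))) / 2 := by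
    intro x hx
    have hxm := hIccsub hx
    have hw : 0 < (x * (1 - x)) ^ ((3:ℝ)/2) :=
      Real.rpow_pos_of_pos (by nlinarith [hxm.1, hxm.2]) _
    have h1 := RSQC_amgm ((x * (1 - x)) ^ ((3:ℝ)/2)) (γ' x) ε hw hε
    have h2 := RSQC_winv_le x hxm
    have hεinv : 0 < ε⁻¹ := by positivity
    calc |γ' x| ≤ (ε * ((x * (1 - x)) ^ ((3:ℝ)/2) * (γ' x) ^ 2)
          + ε⁻¹ * ((x * (1 - x)) ^ ((3:ℝ)/2))⁻¹) / 2 := h1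
      _ ≤ _ := by
          have := mul_le_mul_of_nonneg_left h2 hεinv.le
          linarith
  -- integrate the pointwise bound
  have hmono : ∫ x in a..b, |γ' x| ≤
      ∫ x in a..b, (ε * ((x * (1 - x)) ^ ((3:ℝ)/2) * (γ' x) ^ 2)
        + ε⁻¹ * (4 * x ^ (-(3/2) : ℝ) + 4 * (1-x) ^ (-(3/2) : ℝ))) / 2 := by
    apply intervalIntegral.integral_mono_on hab hIabs
    · apply IntervalIntegrable.div_const
      apply IntervalIntegrable.add (hIw.const_mul ε)
      exact ((hI2.const_mul 4).add (hI3.const_mul 4)).const_mul ε⁻¹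
    · exact hptw
  -- compute/bound the RHS integral
  have hsplit : ∫ x in a..b, (ε * ((x * (1 - x)) ^ ((3:ℝ)/2) * (γ' x) ^ 2)
        + ε⁻¹ * (4 * x ^ (-(3/2) : ℝ) + 4 * (1-x) ^ (-(3/2) : ℝ))) / 2
      = (ε * (∫ x in a..b, (x * (1 - x)) ^ ((3:ℝ)/2) * (γ' x) ^ 2)
        + ε⁻¹ * (4 * (∫ x in a..b, x ^ (-(3/2) : ℝ)) + 4 * (∫ x in a..b, (1-x) ^ (-(3/2) : ℝ)))) / 2 := by
    rw [intervalIntegral.integral_div, intervalIntegral.integral_add (hIw.const_mul ε)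
      (((hI2.const_mul 4).add (hI3.const_mul 4)).const_mul ε⁻¹),
      intervalIntegral.integral_const_mul, intervalIntegral.integral_const_mul,
      intervalIntegral.integral_add (hI2.const_mul 4) (hI3.const_mul 4),
      intervalIntegral.integral_const_mul, intervalIntegral.integral_const_mul]
  -- bound each piece
  have hW : ∫ x in a..b, (x * (1 - x)) ^ ((3:ℝ)/2) * (γ' x) ^ 2
      ≤ ∫ x in Ioo (0:ℝ) 1, (x * (1 - x)) ^ ((3:ℝ)/2) * (γ' x) ^ 2 := by
    rw [intervalIntegral.integral_of_le hab]
    apply setIntegral_mono_set hint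
    · filter_upwards [ae_restrict_mem measurableSet_Ioo] with x hx
      have : 0 ≤ (x * (1-x)) ^ ((3:ℝ)/2) := Real.rpow_nonneg (by nlinarith [hx.1, hx.2]) _
      positivity
    · exact HasSubset.Subset.eventuallyLE (fun x hx =>
        ⟨lt_of_lt_of_le ha (le_of_lt hx.1), lt_of_le_of_lt hx.2 hb⟩)
  have hP2 : ∫ x in a..b, x ^ (-(3/2) : ℝ) ≤ 2 * a ^ (-(1/2) : ℝ) := by
    rw [integral_rpow (Or.inr ⟨by norm_num, by
      rw [Set.uIcc_of_le hab]; rintro ⟨h1, -⟩; exact absurd h1 (not_le.mpr ha)⟩)]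
    have hbn : 0 ≤ b ^ (-(3/2) + 1 : ℝ) := Real.rpow_nonneg hb0.le _
    have : (-(3/2) + 1 : ℝ) = -(1/2) := by norm_num
    rw [this]
    have han : 0 ≤ a ^ (-(1/2) : ℝ) := Real.rpow_nonneg ha.le _
    rw [this] at hbn
    have heq2 : (b ^ (-(1/2):ℝ) - a ^ (-(1/2):ℝ)) / -(1/2)
        = 2 * a ^ (-(1/2):ℝ) - 2 * b ^ (-(1/2):ℝ) := by ring
    rw [heq2]
    linarith
  have hP3 : ∫ x in a..b, (1-x) ^ (-(3/2) : ℝ) ≤ 2 * (1-b) ^ (-(1/2) : ℝ) := by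
    have := intervalIntegral.integral_comp_sub_left (a := a) (b := b)
      (fun x : ℝ => x ^ (-(3/2) : ℝ)) 1
    rw [this]
    have h1b : 0 < 1 - b := by linarith
    have h1a1 : 1 - b ≤ 1 - a := by linarith
    have h1a : (1:ℝ) - a < 1 := by linarith
    rw [integral_rpow (Or.inr ⟨by norm_num, by
      rw [Set.uIcc_of_le h1a1]; rintro ⟨h1, -⟩; exact absurd h1 (not_le.mpr h1b)⟩)]
    have hbn : 0 ≤ (1-a) ^ (-(3/2) + 1 : ℝ) := Real.rpow_nonneg (by linarith) _
    have heq : (-(3/2) + 1 : ℝ) = -(1/2) := by norm_num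
    rw [heq]
    have han : 0 ≤ (1-b) ^ (-(1/2) : ℝ) := Real.rpow_nonneg h1b.le _
    rw [heq] at hbn
    have heq2 : ((1-a) ^ (-(1/2):ℝ) - (1-b) ^ (-(1/2):ℝ)) / -(1/2)
        = 2 * (1-b) ^ (-(1/2):ℝ) - 2 * (1-a) ^ (-(1/2):ℝ) := by ring
    rw [heq2]
    linarith
  rw [hsplit] at hmono
  refine le_trans hmono ?_
  have hεinv : (0:ℝ) ≤ ε⁻¹ := by positivity
  have := mul_le_mul_of_nonneg_left hW hε.le
  have h2 := mul_le_mul_of_nonneg_left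
    (add_le_add (mul_le_mul_of_nonneg_left hP2 (by norm_num : (0:ℝ) ≤ 4))
      (mul_le_mul_of_nonneg_left hP3 (by norm_num : (0:ℝ) ≤ 4))) hεinv
  have heq : ε⁻¹ * (4 * (2 * a ^ (-(1/2):ℝ)) + 4 * (2 * (1-b) ^ (-(1/2):ℝ)))
      = ε⁻¹ * (8 * a ^ (-(1/2):ℝ) + 8 * (1-b) ^ (-(1/2):ℝ)) := by ring
  rw [heq] at h2
  linarith

lemma RSQC_ftc (γ γ' : ℝ → ℝ)
    (hderiv : ∀ x ∈ Ioo (0:ℝ) 1, HasDerivAt γ (γ' x) x)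
    (hcont : ContinuousOn γ' (Ioo (0:ℝ) 1))
    {u v : ℝ} (hu : u ∈ Ioo (0:ℝ) 1) (hv : v ∈ Ioo (0:ℝ) 1) :
    γ v - γ u = ∫ x in u..v, γ' x :=
  (intervalIntegral.integral_eq_sub_of_hasDerivAt
    (fun x hx => hderiv x (RSQC_sub_Ioo hu.1 hu.2 hv.1 hv.2 hx))
    (RSQC_g'ii γ' hcont hu.1 hu.2 hv.1 hv.2)).symm

lemma RSQC_diff_bound (γ γ' : ℝ → ℝ)
    (hderiv : ∀ x ∈ Ioo (0:ℝ) 1, HasDerivAt γ (γ' x) x)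
    (hcont : ContinuousOn γ' (Ioo (0:ℝ) 1))
    {a b : ℝ} (ha : 0 < a) (hab : a ≤ b) (hb : b < 1)
    {c d : ℝ} (hc : c ∈ Icc a b) (hd : d ∈ Icc a b) :
    |γ d - γ c| ≤ ∫ x in a..b, |γ' x| := by
  have ha1 : a < 1 := lt_of_le_of_lt hab hb
  have hb0 : 0 < b := lt_of_lt_of_le ha hab
  have hIccsub : Icc a b ⊆ Ioo (0:ℝ) 1 := fun x ⟨h1, h2⟩ =>
    ⟨lt_of_lt_of_le ha h1, lt_of_le_of_lt h2 hb⟩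
  have hcm := hIccsub hc
  have hdm := hIccsub hd
  have hIabs : IntervalIntegrable (fun x => |γ' x|) volume a b :=
    ((hcont.mono (RSQC_sub_Ioo ha ha1 hb0 hb)).abs).intervalIntegrable
  have hnn : 0 ≤ᶠ[ae (volume.restrict (Ioc a b))] (fun x => |γ' x|) :=
    Filter.Eventually.of_forall (fun x => abs_nonneg _)
  rw [RSQC_ftc γ γ' hderiv hcont hcm hdm]
  have h1 : |∫ x in c..d, γ' x| ≤ abs (∫ x in c..d, |γ' x|) := by
    have := intervalIntegral.norm_integral_le_abs_integral_norm
      (a := c) (b := d) (f := γ') (μ := volume)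
    simpa [Real.norm_eq_abs] using this
  refine le_trans h1 ?_
  rcases le_total c d with hcd | hdc
  · rw [abs_of_nonneg (intervalIntegral.integral_nonneg hcd (fun x _ => abs_nonneg _))]
    exact intervalIntegral.integral_mono_interval hc.1 hcd hd.2 hnn hIabs
  · rw [intervalIntegral.integral_symm, abs_neg,
      abs_of_nonneg (intervalIntegral.integral_nonneg hdc (fun x _ => abs_nonneg _))]
    exact intervalIntegral.integral_mono_interval hd.1 hdc hc.2 hnn hIabs

lemma RSQC_eps_arith (A y : ℝ) (hA : 0 ≤ A) (hy0 : 0 < y) (hy : y ≤ 1/2) :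
    (y ^ (-(1/4):ℝ) * A + (y ^ (-(1/4):ℝ))⁻¹ * (8 * y ^ (-(1/2):ℝ) + 8 * ((1:ℝ)/2) ^ (-(1/2):ℝ))) / 2
      ≤ (A/2 + 12) * y ^ (-(1/4):ℝ) := by
  have hy1 : y ≤ 1 := by linarith
  have h1 : (y ^ (-(1/4):ℝ))⁻¹ = y ^ ((1/4):ℝ) := by
    rw [Real.rpow_neg hy0.le, inv_inv]
  have h2 : y ^ ((1/4):ℝ) * y ^ (-(1/2):ℝ) = y ^ (-(1/4):ℝ) := by
    rw [← Real.rpow_add hy0]; norm_num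
  have h3 : y ^ ((1/4):ℝ) ≤ 1 := Real.rpow_le_one hy0.le hy1 (by norm_num)
  have h4 : 1 ≤ y ^ (-(1/4):ℝ) :=
    Real.one_le_rpow_of_pos_of_le_one_of_nonpos hy0 hy1 (by norm_num)
  have h5 : ((1:ℝ)/2) ^ (-(1/2):ℝ) ≤ 2 := by
    have := Real.rpow_le_rpow_of_exponent_ge (by norm_num : (0:ℝ) < 1/2) (by norm_num)
      (show (-1:ℝ) ≤ -(1/2) by norm_num)
    rwa [Real.rpow_neg_one, show ((1:ℝ)/2)⁻¹ = 2 by norm_num] at this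
  have h6 : 0 < y ^ ((1/4):ℝ) := Real.rpow_pos_of_pos hy0 _
  have h7 : 0 ≤ ((1:ℝ)/2) ^ (-(1/2):ℝ) := Real.rpow_nonneg (by norm_num) _
  rw [h1]
  have e1 : y ^ ((1/4):ℝ) * (8 * y ^ (-(1/2):ℝ)) = 8 * y ^ (-(1/4):ℝ) := by
    rw [show y ^ ((1/4):ℝ) * (8 * y ^ (-(1/2):ℝ)) = 8 * (y ^ ((1/4):ℝ) * y ^ (-(1/2):ℝ)) by ring, h2]
  have e2 : y ^ ((1/4):ℝ) * (8 * ((1:ℝ)/2) ^ (-(1/2):ℝ)) ≤ 16 := by nlinarith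
  nlinarith [mul_le_mul_of_nonneg_right hA (le_of_lt (Real.rpow_pos_of_pos hy0 (-(1/4):ℝ)))]

lemma RSQC_gamma_ptwise (γ γ' : ℝ → ℝ)
    (hderiv : ∀ x ∈ Ioo (0:ℝ) 1, HasDerivAt γ (γ' x) x)
    (hcont : ContinuousOn γ' (Ioo (0:ℝ) 1))
    (hint : IntegrableOn (fun x => (x * (1 - x)) ^ ((3:ℝ)/2) * (γ' x) ^ 2) (Ioo (0:ℝ) 1)) :
    ∀ x ∈ Ioo (0:ℝ) 1, |γ x| ≤
      (|γ (1/2)| + (∫ x in Ioo (0:ℝ) 1, (x * (1 - x)) ^ ((3:ℝ)/2) * (γ' x) ^ 2)/2 + 12)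
        * (x ^ (-(1/4):ℝ) + (1-x) ^ (-(1/4):ℝ)) := by
  set A := ∫ x in Ioo (0:ℝ) 1, (x * (1 - x)) ^ ((3:ℝ)/2) * (γ' x) ^ 2 with hA
  have hA0 : 0 ≤ A := by
    apply setIntegral_nonneg measurableSet_Ioo
    intro x hx
    have : 0 ≤ (x * (1-x)) ^ ((3:ℝ)/2) := Real.rpow_nonneg (by nlinarith [hx.1, hx.2]) _
    positivity
  intro x hx
  obtain ⟨hx0, hx1⟩ := hx
  have hhalf : (1/2 : ℝ) ∈ Ioo (0:ℝ) 1 := by norm_num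
  have habs : |γ x| ≤ |γ (1/2)| + |γ x - γ (1/2)| := by
    have := abs_sub_abs_le_abs_sub (γ x) (γ (1/2)); linarith
  have hxq0 : 0 < x ^ (-(1/4):ℝ) := Real.rpow_pos_of_pos hx0 _
  have hxq0' : 0 < (1-x) ^ (-(1/4):ℝ) := Real.rpow_pos_of_pos (by linarith) _
  have hK0 : 0 ≤ |γ (1/2)| + A/2 + 12 := by positivity
  rcases le_total x (1/2) with hc | hc
  · have hd := RSQC_diff_bound γ γ' hderiv hcont hx0 hc (by norm_num)
      (c := 1/2) (d := x) ⟨hc, le_refl _⟩ ⟨le_refl x, hc⟩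
    have hb := RSQC_absint_bound γ' hcont hint hx0 hc (by norm_num)
      (ε := x ^ (-(1/4):ℝ)) (Real.rpow_pos_of_pos hx0 _)
    rw [show (1:ℝ) - 1/2 = 1/2 by norm_num] at hb
    have harith := RSQC_eps_arith A x hA0 hx0 hc
    have hmain : |γ x| ≤ (|γ (1/2)| + A/2 + 12) * x ^ (-(1/4):ℝ) := by
      have h4 : 1 ≤ x ^ (-(1/4):ℝ) :=
        Real.one_le_rpow_of_pos_of_le_one_of_nonpos hx0 (by linarith) (by norm_num)
      nlinarith [abs_nonneg (γ (1/2))]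
    calc |γ x| ≤ (|γ (1/2)| + A/2 + 12) * x ^ (-(1/4):ℝ) := hmain
      _ ≤ _ := by nlinarith
  · have h1x0 : 0 < 1 - x := by linarith
    have hd := RSQC_diff_bound γ γ' hderiv hcont (by norm_num : (0:ℝ) < 1/2) hc hx1
      (c := 1/2) (d := x) (by constructor <;> [norm_num; exact hc]) ⟨hc, le_refl x⟩
    have hb := RSQC_absint_bound γ' hcont hint (by norm_num : (0:ℝ) < 1/2) hc hx1
      (ε := (1-x) ^ (-(1/4):ℝ)) (Real.rpow_pos_of_pos h1x0 _)
    rw [add_comm (8 * ((1:ℝ)/2) ^ (-(1/2):ℝ)) (8 * (1-x) ^ (-(1/2):ℝ))] at hb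
    have harith := RSQC_eps_arith A (1-x) hA0 h1x0 (by linarith)
    have hmain : |γ x| ≤ (|γ (1/2)| + A/2 + 12) * (1-x) ^ (-(1/4):ℝ) := by
      have h4 : 1 ≤ (1-x) ^ (-(1/4):ℝ) :=
        Real.one_le_rpow_of_pos_of_le_one_of_nonpos h1x0 (by linarith) (by norm_num)
      nlinarith [abs_nonneg (γ (1/2))]
    calc |γ x| ≤ (|γ (1/2)| + A/2 + 12) * (1-x) ^ (-(1/4):ℝ) := hmain
      _ ≤ _ := by nlinarith

lemma RSQC_tail (g : ℝ → ℝ) (K : ℝ) (hK : 0 ≤ K)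
    (hbd : ∀ x ∈ Ioo (0:ℝ) 1, |g x| ≤ K * (x ^ (-(1/4):ℝ) + (1-x) ^ (-(1/4):ℝ)))
    {c : ℝ} (hc0 : 0 < c) (hc : c ≤ 1/2)
    (hgi : IntegrableOn g (Ioo (0:ℝ) c)) :
    ∫ x in Ioo (0:ℝ) c, |g x| ≤ 4 * K * c ^ ((3:ℝ)/4) := by
  have hc1 : c < 1 := by linarith
  -- integrability of the bounding function
  have hi1 : IntegrableOn (fun x : ℝ => x ^ (-(1/4):ℝ)) (Ioo (0:ℝ) c) := by
    have := intervalIntegral.intervalIntegrable_rpow' (a := 0) (b := c)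
      (r := -(1/4)) (by norm_num)
    rw [intervalIntegrable_iff, Set.uIoc_of_le hc0.le] at this
    exact this.mono_set Set.Ioo_subset_Ioc_self
  have hi2 : IntegrableOn (fun x : ℝ => (1-x) ^ (-(1/4):ℝ)) (Ioo (0:ℝ) c) := by
    have hcont : ContinuousOn (fun x : ℝ => (1-x) ^ (-(1/4):ℝ)) (Icc (0:ℝ) c) := by
      apply ContinuousOn.rpow_const (by fun_prop)
      intro x hx
      exact Or.inl (ne_of_gt (by linarith [hx.2] : (0:ℝ) < 1 - x))
    exact (hcont.integrableOn_Icc).mono_set Set.Ioo_subset_Icc_self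
  have hiB : IntegrableOn (fun x : ℝ => K * (x ^ (-(1/4):ℝ) + (1-x) ^ (-(1/4):ℝ)))
      (Ioo (0:ℝ) c) := ((hi1.add hi2).const_mul K)
  have hmono : ∫ x in Ioo (0:ℝ) c, |g x|
      ≤ ∫ x in Ioo (0:ℝ) c, K * (x ^ (-(1/4):ℝ) + (1-x) ^ (-(1/4):ℝ)) := by
    apply setIntegral_mono_on hgi.abs hiB measurableSet_Ioo
    intro x hx
    exact hbd x ⟨hx.1, lt_of_lt_of_le hx.2 (by linarith)⟩
  refine le_trans hmono ?_
  rw [MeasureTheory.integral_const_mul]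
  have hsplit : ∫ x in Ioo (0:ℝ) c, (x ^ (-(1/4):ℝ) + (1-x) ^ (-(1/4):ℝ))
      = (∫ x in Ioo (0:ℝ) c, x ^ (-(1/4):ℝ)) + ∫ x in Ioo (0:ℝ) c, (1-x) ^ (-(1/4):ℝ) :=
    integral_add hi1 hi2
  have hc34 : 0 < c ^ ((3:ℝ)/4) := Real.rpow_pos_of_pos hc0 _
  have hP1 : ∫ x in Ioo (0:ℝ) c, x ^ (-(1/4):ℝ) ≤ (4/3) * c ^ ((3:ℝ)/4) := by
    rw [← integral_Ioc_eq_integral_Ioo, ← intervalIntegral.integral_of_le hc0.le,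
      integral_rpow (Or.inl (by norm_num))]
    rw [show (-(1/4) + 1 : ℝ) = 3/4 by norm_num, Real.zero_rpow (by norm_num : (3/4:ℝ) ≠ 0)]
    rw [show (c ^ ((3:ℝ)/4) - 0) / (3/4) = (4/3) * c ^ ((3:ℝ)/4) by ring]
  have hP2 : ∫ x in Ioo (0:ℝ) c, (1-x) ^ (-(1/4):ℝ) ≤ 2 * c ^ ((3:ℝ)/4) := by
    have hptw : ∀ x ∈ Ioo (0:ℝ) c, (1-x) ^ (-(1/4):ℝ) ≤ 2 := by
      intro x hx
      have h1 : (1/2 : ℝ) ≤ 1 - x := by linarith [hx.2]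
      calc (1-x) ^ (-(1/4):ℝ) ≤ (1/2 : ℝ) ^ (-(1/4):ℝ) :=
            Real.rpow_le_rpow_of_nonpos (by norm_num) h1 (by norm_num)
        _ ≤ (1/2 : ℝ) ^ (-1:ℝ) :=
            Real.rpow_le_rpow_of_exponent_ge (by norm_num) (by norm_num) (by norm_num)
        _ = 2 := by rw [Real.rpow_neg_one]; norm_num
    have : ∫ x in Ioo (0:ℝ) c, (1-x) ^ (-(1/4):ℝ) ≤ ∫ _x in Ioo (0:ℝ) c, (2:ℝ) := by
      apply setIntegral_mono_on hi2 (integrableOn_const (by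
        rw [Real.volume_Ioo]; exact ENNReal.ofReal_ne_top)) measurableSet_Ioo hptw
    refine le_trans this ?_
    rw [setIntegral_const]
    rw [Real.volume_real_Ioo, smul_eq_mul, max_eq_left (by linarith)]
    have hcle : c ≤ c ^ ((3:ℝ)/4) := by
      have := Real.rpow_le_rpow_of_exponent_ge hc0 (by linarith : c ≤ 1)
        (by norm_num : (3:ℝ)/4 ≤ 1)
      rwa [Real.rpow_one] at this
    nlinarith
  rw [hsplit]
  nlinarith

set_option maxHeartbeats 1000000 in
lemma RSQC_key (γ γ' : ℝ → ℝ)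
    (hderiv : ∀ x ∈ Ioo (0:ℝ) 1, HasDerivAt γ (γ' x) x)
    (hcont : ContinuousOn γ' (Ioo (0:ℝ) 1))
    (hint : IntegrableOn (fun x => (x * (1 - x)) ^ ((3:ℝ)/2) * (γ' x) ^ 2) (Ioo (0:ℝ) 1))
    (hγint : IntegrableOn γ (Ioo (0:ℝ) 1)) :
    ∃ C : ℝ, 0 ≤ C ∧ ∀ n : ℕ, 1 ≤ n →
      |(∑ i ∈ Finset.Icc 1 n, γ ((i : ℝ) / ((n:ℝ) + 1))) - (n:ℝ) * ∫ x in Ioo (0:ℝ) 1, γ x|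
        ≤ C * ((n:ℝ)+1) ^ ((1:ℝ)/4) := by
  set A := ∫ x in Ioo (0:ℝ) 1, (x * (1 - x)) ^ ((3:ℝ)/2) * (γ' x) ^ 2 with hAdef
  have hA0 : 0 ≤ A := by
    apply setIntegral_nonneg measurableSet_Ioo
    intro x hx
    have : 0 ≤ (x * (1-x)) ^ ((3:ℝ)/2) := Real.rpow_nonneg (by nlinarith [hx.1, hx.2]) _
    positivity
  set K := |γ (1/2)| + A/2 + 12 with hKdef
  have hK0 : 0 ≤ K := by positivity
  have hbd := RSQC_gamma_ptwise γ γ' hderiv hcont hint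
  set I := ∫ x in Ioo (0:ℝ) 1, γ x with hIdef
  refine ⟨A/2 + 16 + 8*K + |I|, by positivity, ?_⟩
  intro n hn
  set m := (n:ℝ) + 1 with hm
  have hn1 : (1:ℝ) ≤ (n:ℝ) := by exact_mod_cast hn
  have hm2 : 2 ≤ m := by linarith
  have hm0 : 0 < m := by linarith
  set c := 1/(2*m) with hc
  have hc0 : 0 < c := by positivity
  have hc4 : c ≤ 1/4 := by rw [hc]; rw [div_le_div_iff₀ (by linarith) (by norm_num)]; linarith
  set a : ℕ → ℝ := fun i => ((i:ℝ) + 1/2)/m with ha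
  have ha0 : a 0 = c := by simp [ha, hc]; ring
  have han : a n = 1 - c := by
    simp only [ha, hc, hm]; field_simp; ring
  have hamem : ∀ k, k ≤ n → c ≤ a k ∧ a k ≤ 1 - c := by
    intro k hk
    have hkn : (k:ℝ) ≤ (n:ℝ) := by exact_mod_cast hk
    constructor
    · rw [hc, ha]
      rw [div_le_div_iff₀ (by linarith) (by linarith)]
      nlinarith
    · rw [hc, ha]
      rw [div_le_iff₀ (by linarith)]
      have : (1 - 1/(2*m)) * m = m - 1/2 := by field_simp
      rw [this]; rw [hm]; linarith
  have hapos : ∀ k, k ≤ n → 0 < a k ∧ a k < 1 := by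
    intro k hk
    obtain ⟨h1, h2⟩ := hamem k hk
    exact ⟨lt_of_lt_of_le hc0 h1, lt_of_le_of_lt h2 (by linarith)⟩
  have hastep : ∀ k : ℕ, a (k+1) - a k = 1/m := by
    intro k
    show (((k+1:ℕ):ℝ) + 1/2)/m - ((k:ℝ) + 1/2)/m = 1/m
    push_cast
    rw [div_sub_div_same]
    norm_num

  have hamono : ∀ j k : ℕ, j ≤ k → a j ≤ a k := by
    intro j k hjk
    have hjk' : (j:ℝ) ≤ (k:ℝ) := by exact_mod_cast hjk
    show ((j:ℝ) + 1/2)/m ≤ ((k:ℝ) + 1/2)/m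
    gcongr

    -- interval integrability helper
  have hγII : ∀ u v : ℝ, 0 ≤ u → u ≤ 1 → 0 ≤ v → v ≤ 1 → IntervalIntegrable γ volume u v :=
    fun u v h1 h2 h3 h4 => RSQC_gii γ hγint h1 h2 h3 h4
  have haIcc : ∀ k, k ≤ n → 0 ≤ a k ∧ a k ≤ 1 := fun k hk =>
    ⟨(hapos k hk).1.le, (hapos k hk).2.le⟩
  -- reindex the sum
  have hS : (∑ i ∈ Finset.Icc 1 n, γ ((i : ℝ) / m))
      = ∑ j ∈ Finset.range n, γ (((j:ℝ) + 1) / m) := by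
    rw [← Finset.Ico_add_one_right_eq_Icc, Finset.sum_Ico_eq_sum_range]
    apply Finset.sum_congr rfl
    intro j hj
    congr 1
    push_cast
    ring
  -- decomposition of the integral
  have h03 : (∑ j ∈ Finset.range n, ∫ x in a j..a (j+1), γ x)
      = ∫ x in (a 0)..(a n), γ x := by
    apply intervalIntegral.sum_integral_adjacent_intervals
    intro k hk
    exact hγII _ _ (haIcc k (le_of_lt hk)).1 (haIcc k (le_of_lt hk)).2
      (haIcc (k+1) hk).1 (haIcc (k+1) hk).2
  have h02 : (∫ x in (a 0)..(a n), γ x) + (∫ x in (a n)..(1:ℝ), γ x)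
      = ∫ x in (a 0)..(1:ℝ), γ x :=
    intervalIntegral.integral_add_adjacent_intervals
      (hγII _ _ (haIcc 0 (by omega)).1 (haIcc 0 (by omega)).2
        (haIcc n le_rfl).1 (haIcc n le_rfl).2)
      (hγII _ _ (haIcc n le_rfl).1 (haIcc n le_rfl).2 (by norm_num) (le_refl 1))
  have h01 : (∫ x in (0:ℝ)..(a 0), γ x) + (∫ x in (a 0)..(1:ℝ), γ x)
      = ∫ x in (0:ℝ)..(1:ℝ), γ x :=
    intervalIntegral.integral_add_adjacent_intervals
      (hγII _ _ (le_refl 0) (by norm_num) (haIcc 0 (by omega)).1 (haIcc 0 (by omega)).2)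
      (hγII _ _ (haIcc 0 (by omega)).1 (haIcc 0 (by omega)).2 (by norm_num) (le_refl 1))
  have hIsplit : I = (∫ x in (0:ℝ)..(a 0), γ x)
      + (∑ j ∈ Finset.range n, ∫ x in a j..a (j+1), γ x) + ∫ x in (a n)..(1:ℝ), γ x := by
    rw [h03]
    have : I = ∫ x in (0:ℝ)..(1:ℝ), γ x := by
      rw [hIdef, ← integral_Ioc_eq_integral_Ioo,
        ← intervalIntegral.integral_of_le (by norm_num : (0:ℝ) ≤ 1)]
    rw [this]
    linarith [h01, h02]
  -- per-interval estimate
  have hper : ∀ j ∈ Finset.range n, |γ (((j:ℝ)+1)/m) - m * ∫ x in a j..a (j+1), γ x|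
      ≤ ∫ x in a j..a (j+1), |γ' x| := by
    intro j hj
    have hjn : j < n := Finset.mem_range.mp hj
    have hj0 := hapos j (le_of_lt hjn)
    have hj1 := hapos (j+1) hjn
    have hstep := hastep j
    have hab : a j ≤ a (j+1) := by
      have : 0 < 1/m := by positivity
      linarith
    have hcm1 : a j ≤ ((j:ℝ)+1)/m := by
      show ((j:ℝ)+1/2)/m ≤ ((j:ℝ)+1)/m
      rw [div_le_div_iff₀ hm0 hm0]
      nlinarith
    have hcm2 : ((j:ℝ)+1)/m ≤ a (j+1) := by
      show ((j:ℝ)+1)/m ≤ (((j+1:ℕ):ℝ)+1/2)/m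
      push_cast
      rw [div_le_div_iff₀ hm0 hm0]
      nlinarith
    have hconst : ∫ x in a j..a (j+1), (γ (((j:ℝ)+1)/m) - γ x)
        = (1/m) * γ (((j:ℝ)+1)/m) - ∫ x in a j..a (j+1), γ x := by
      rw [intervalIntegral.integral_sub intervalIntegrable_const
        (hγII _ _ (haIcc j (le_of_lt hjn)).1 (haIcc j (le_of_lt hjn)).2
          (haIcc (j+1) hjn).1 (haIcc (j+1) hjn).2),
        intervalIntegral.integral_const, hastep j, smul_eq_mul]
    have hnorm : |(1/m) * γ (((j:ℝ)+1)/m) - ∫ x in a j..a (j+1), γ x|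
        ≤ (∫ x in a j..a (j+1), |γ' x|) * |a (j+1) - a j| := by
      rw [← hconst]
      have hb := intervalIntegral.norm_integral_le_of_norm_le_const
        (C := ∫ x in a j..a (j+1), |γ' x|)
        (f := fun x => γ (((j:ℝ)+1)/m) - γ x) (a := a j) (b := a (j+1)) ?_
      · simpa [Real.norm_eq_abs] using hb
      · intro x hx
        rw [Set.uIoc_of_le hab] at hx
        have hx' : x ∈ Icc (a j) (a (j+1)) := ⟨le_of_lt hx.1, hx.2⟩
        have hd := RSQC_diff_bound γ γ' hderiv hcont hj0.1 hab hj1.2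
          (c := x) (d := ((j:ℝ)+1)/m) hx' ⟨hcm1, hcm2⟩
        simpa [Real.norm_eq_abs] using hd
    rw [hastep j] at hnorm
    have habs1 : |γ (((j:ℝ)+1)/m) - m * ∫ x in a j..a (j+1), γ x|
        = m * |(1/m) * γ (((j:ℝ)+1)/m) - ∫ x in a j..a (j+1), γ x| := by
      have e : γ (((j:ℝ)+1)/m) - m * ∫ x in a j..a (j+1), γ x
          = m * ((1/m) * γ (((j:ℝ)+1)/m) - ∫ x in a j..a (j+1), γ x) := by
        field_simp
      rw [e, abs_mul, abs_of_pos hm0]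
    rw [habs1]
    have := mul_le_mul_of_nonneg_left hnorm hm0.le
    calc m * |(1/m) * γ (((j:ℝ)+1)/m) - ∫ x in a j..a (j+1), γ x|
        ≤ m * ((∫ x in a j..a (j+1), |γ' x|) * |1/m|) := this
      _ = ∫ x in a j..a (j+1), |γ' x| := by
          rw [abs_of_pos (by positivity : (0:ℝ) < 1/m)]
          field_simp
  -- the sum of |γ'| integrals telescopes
  have hsumJ : (∑ j ∈ Finset.range n, ∫ x in a j..a (j+1), |γ' x|)
      = ∫ x in (a 0)..(a n), |γ' x| := by
    apply intervalIntegral.sum_integral_adjacent_intervals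
    intro k hk
    exact ((hcont.mono (RSQC_sub_Ioo (hapos k hk.le).1 (hapos k hk.le).2
      (hapos (k+1) hk).1 (hapos (k+1) hk).2)).abs).intervalIntegrable
  -- bound on the telescoped integral
  have hm14 : (0:ℝ) < m ^ ((1:ℝ)/4) := Real.rpow_pos_of_pos hm0 _
  have hEbd : (∫ x in (a 0)..(a n), |γ' x|) ≤ (A/2 + 16) * m ^ ((1:ℝ)/4) := by
    rw [ha0, han]
    have hb := RSQC_absint_bound γ' hcont hint (a := c) (b := 1 - c)
      hc0 (by linarith) (by linarith) (ε := m ^ ((1:ℝ)/4)) hm14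
    rw [show (1:ℝ) - (1 - c) = c by ring] at hb
    rw [← hAdef] at hb
    have h2m : (0:ℝ) < 2*m := by linarith
    have f1 : (m ^ ((1:ℝ)/4))⁻¹ = m ^ (-(1/4):ℝ) := by
      rw [Real.rpow_neg hm0.le]
    have f2 : c ^ (-(1/2):ℝ) = (2*m) ^ ((1:ℝ)/2) := by
      rw [hc, one_div, Real.inv_rpow h2m.le, Real.rpow_neg h2m.le, inv_inv]
    have f3 : (2*m) ^ ((1:ℝ)/2) ≤ 2 * m ^ ((1:ℝ)/2) := by
      rw [Real.mul_rpow (by norm_num) hm0.le]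
      have : (2:ℝ) ^ ((1:ℝ)/2) ≤ 2 := by
        have := Real.rpow_le_rpow_of_exponent_le (by norm_num : (1:ℝ) ≤ 2)
          (by norm_num : (1:ℝ)/2 ≤ 1)
        rwa [Real.rpow_one] at this
      have hms : 0 ≤ m ^ ((1:ℝ)/2) := Real.rpow_nonneg hm0.le _
      nlinarith
    have f4 : m ^ (-(1/4):ℝ) * m ^ ((1:ℝ)/2) = m ^ ((1:ℝ)/4) := by
      rw [← Real.rpow_add hm0]
      norm_num
    have hmn4 : (0:ℝ) ≤ m ^ (-(1/4):ℝ) := Real.rpow_nonneg hm0.le _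
    rw [f1, f2] at hb
    have f5 : m ^ (-(1/4):ℝ) * (8 * (2*m) ^ ((1:ℝ)/2) + 8 * (2*m) ^ ((1:ℝ)/2))
        ≤ 32 * m ^ ((1:ℝ)/4) := by
      have := mul_le_mul_of_nonneg_left f3 hmn4
      nlinarith [f4, Real.rpow_nonneg hm0.le ((1:ℝ)/2)]
    have hAm : m ^ ((1:ℝ)/4) * A = A * m ^ ((1:ℝ)/4) := by ring
    nlinarith [hb]
  -- tail bounds
  have hIooc : Ioo (0:ℝ) c ⊆ Ioo (0:ℝ) 1 := Set.Ioo_subset_Ioo le_rfl (by linarith)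
  have hT0 : |∫ x in (0:ℝ)..(a 0), γ x| ≤ 4*K*c ^ ((3:ℝ)/4) := by
    rw [ha0, intervalIntegral.integral_of_le hc0.le, integral_Ioc_eq_integral_Ioo]
    refine le_trans ?_ (RSQC_tail γ K hK0 hbd hc0 (by linarith) (hγint.mono_set hIooc))
    simpa [Real.norm_eq_abs] using
      norm_integral_le_integral_norm (μ := volume.restrict (Ioo (0:ℝ) c)) γ
  have hT1 : |∫ x in (a n)..(1:ℝ), γ x| ≤ 4*K*c ^ ((3:ℝ)/4) := by
    rw [han]
    have hcomp : ∫ x in (1-c)..(1:ℝ), γ x = ∫ x in (0:ℝ)..c, γ (1-x) := by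
      simpa using (intervalIntegral.integral_comp_sub_left (a := 0) (b := c) γ 1).symm
    rw [hcomp, intervalIntegral.integral_of_le hc0.le, integral_Ioc_eq_integral_Ioo]
    have hbd' : ∀ x ∈ Ioo (0:ℝ) 1, |γ (1-x)| ≤ K * (x ^ (-(1/4):ℝ) + (1-x) ^ (-(1/4):ℝ)) := by
      intro x hx
      have hmem : (1-x) ∈ Ioo (0:ℝ) 1 := ⟨by linarith [hx.2], by linarith [hx.1]⟩
      have := hbd (1-x) hmem
      rw [show (1:ℝ) - (1-x) = x by ring] at this
      calc |γ (1-x)| ≤ K * ((1-x) ^ (-(1/4):ℝ) + x ^ (-(1/4):ℝ)) := this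
        _ = K * (x ^ (-(1/4):ℝ) + (1-x) ^ (-(1/4):ℝ)) := by ring
    have hgi' : IntegrableOn (fun x => γ (1-x)) (Ioo (0:ℝ) c) := by
      have hII := (hγII (1-c) 1 (by linarith) (by linarith) (by norm_num) (le_refl 1)).comp_sub_left 1
      simp only [sub_sub_cancel, sub_self] at hII
      have := hII.symm
      rw [intervalIntegrable_iff, Set.uIoc_of_le hc0.le] at this
      exact this.mono_set Set.Ioo_subset_Ioc_self
    refine le_trans ?_ (RSQC_tail (fun x => γ (1-x)) K hK0 hbd' hc0 (by linarith) hgi')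
    simpa [Real.norm_eq_abs] using
      norm_integral_le_integral_norm (μ := volume.restrict (Ioo (0:ℝ) c)) (fun x => γ (1-x))
  -- main identity
  have hid : (∑ i ∈ Finset.Icc 1 n, γ ((i:ℝ)/m)) - m * I
      = (∑ j ∈ Finset.range n, (γ (((j:ℝ)+1)/m) - m * ∫ x in a j..a (j+1), γ x))
        - m * (∫ x in (0:ℝ)..(a 0), γ x) - m * (∫ x in (a n)..(1:ℝ), γ x) := by
    rw [hS, hIsplit, Finset.sum_sub_distrib, ← Finset.mul_sum]
    ring
  -- assemble
  have hsum_le : |∑ j ∈ Finset.range n, (γ (((j:ℝ)+1)/m) - m * ∫ x in a j..a (j+1), γ x)|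
      ≤ ∫ x in (a 0)..(a n), |γ' x| := by
    calc |∑ j ∈ Finset.range n, (γ (((j:ℝ)+1)/m) - m * ∫ x in a j..a (j+1), γ x)|
        ≤ ∑ j ∈ Finset.range n, |γ (((j:ℝ)+1)/m) - m * ∫ x in a j..a (j+1), γ x| :=
          Finset.abs_sum_le_sum_abs _ _
      _ ≤ ∑ j ∈ Finset.range n, ∫ x in a j..a (j+1), |γ' x| := Finset.sum_le_sum hper
      _ = _ := hsumJ
  have hmc : m * c ^ ((3:ℝ)/4) ≤ m ^ ((1:ℝ)/4) := by
    have hcm : c ≤ 1/m := by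
      rw [hc]
      rw [div_le_div_iff₀ (by linarith) (by linarith)]
      linarith
    have h1 : c ^ ((3:ℝ)/4) ≤ (1/m) ^ ((3:ℝ)/4) :=
      Real.rpow_le_rpow hc0.le hcm (by norm_num)
    have h2 : (1/m) ^ ((3:ℝ)/4) = m ^ (-(3/4):ℝ) := by
      rw [one_div, Real.inv_rpow hm0.le, Real.rpow_neg hm0.le]
    have h3 : m * m ^ (-(3/4):ℝ) = m ^ ((1:ℝ)/4) := by
      nth_rewrite 1 [← Real.rpow_one m]
      rw [← Real.rpow_add hm0]
      norm_num
    calc m * c ^ ((3:ℝ)/4) ≤ m * (1/m) ^ ((3:ℝ)/4) := by nlinarith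
      _ = m ^ ((1:ℝ)/4) := by rw [h2, h3]
  have hsplit2 : |(∑ i ∈ Finset.Icc 1 n, γ ((i:ℝ)/m)) - (n:ℝ) * I|
      ≤ |(∑ i ∈ Finset.Icc 1 n, γ ((i:ℝ)/m)) - m * I| + |I| := by
    have : (∑ i ∈ Finset.Icc 1 n, γ ((i:ℝ)/m)) - (n:ℝ) * I
        = ((∑ i ∈ Finset.Icc 1 n, γ ((i:ℝ)/m)) - m * I) + I := by
      rw [hm]; ring
    rw [this]
    exact abs_add_le _ _
  have hmid : |(∑ i ∈ Finset.Icc 1 n, γ ((i:ℝ)/m)) - m * I|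
      ≤ (∫ x in (a 0)..(a n), |γ' x|) + m * (4*K*c ^ ((3:ℝ)/4)) + m * (4*K*c ^ ((3:ℝ)/4)) := by
    rw [hid]
    have e1 := abs_sub (((∑ j ∈ Finset.range n, (γ (((j:ℝ)+1)/m) - m * ∫ x in a j..a (j+1), γ x))
      - m * (∫ x in (0:ℝ)..(a 0), γ x))) (m * (∫ x in (a n)..(1:ℝ), γ x))
    have e2 := abs_sub (∑ j ∈ Finset.range n, (γ (((j:ℝ)+1)/m) - m * ∫ x in a j..a (j+1), γ x))
      (m * (∫ x in (0:ℝ)..(a 0), γ x))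
    have e3 : |m * (∫ x in (0:ℝ)..(a 0), γ x)| ≤ m * (4*K*c ^ ((3:ℝ)/4)) := by
      rw [abs_mul, abs_of_pos hm0]
      exact mul_le_mul_of_nonneg_left hT0 hm0.le
    have e4 : |m * (∫ x in (a n)..(1:ℝ), γ x)| ≤ m * (4*K*c ^ ((3:ℝ)/4)) := by
      rw [abs_mul, abs_of_pos hm0]
      exact mul_le_mul_of_nonneg_left hT1 hm0.le
    linarith
  have hone : 1 ≤ m ^ ((1:ℝ)/4) := Real.one_le_rpow (by linarith) (by norm_num)
  have hfin : m * (4*K*c ^ ((3:ℝ)/4)) ≤ 4*K* m ^ ((1:ℝ)/4) := by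
    have : m * (4*K*c ^ ((3:ℝ)/4)) = 4*K*(m * c ^ ((3:ℝ)/4)) := by ring
    rw [this]
    have := mul_le_mul_of_nonneg_left hmc (by positivity : (0:ℝ) ≤ 4*K)
    linarith
  have hI14 : |I| ≤ |I| * m ^ ((1:ℝ)/4) := by
    nlinarith [abs_nonneg I]
  calc |(∑ i ∈ Finset.Icc 1 n, γ ((i:ℝ)/m)) - (n:ℝ) * I|
      ≤ |(∑ i ∈ Finset.Icc 1 n, γ ((i:ℝ)/m)) - m * I| + |I| := hsplit2
    _ ≤ (∫ x in (a 0)..(a n), |γ' x|) + m * (4*K*c ^ ((3:ℝ)/4)) + m * (4*K*c ^ ((3:ℝ)/4)) + |I| := by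
        linarith
    _ ≤ (A/2 + 16) * m ^ ((1:ℝ)/4) + 4*K* m ^ ((1:ℝ)/4) + 4*K* m ^ ((1:ℝ)/4)
        + |I| * m ^ ((1:ℝ)/4) := by linarith
    _ = (A/2 + 16 + 8*K + |I|) * m ^ ((1:ℝ)/4) := by ring



set_option maxHeartbeats 1000000 in
/-- Lemma 3.3: if `γ` is C¹ on (0,1) with `∫₀¹ (x(1−x))^{3/2} γ'(x)² dx < ∞` and `γ` is
integrable on (0,1), then `(1/√n) ∑_{i=1}^n γ(i/(n+1)) − √n ∫₀¹ γ(x) dx → 0`. -/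
theorem riemann_sum_quantile_correction
    (γ γ' : ℝ → ℝ)
    (hderiv : ∀ x ∈ Ioo (0:ℝ) 1, HasDerivAt γ (γ' x) x)
    (hcont : ContinuousOn γ' (Ioo (0:ℝ) 1))
    (hint : IntegrableOn (fun x => (x * (1 - x)) ^ ((3:ℝ)/2) * (γ' x) ^ 2) (Ioo (0:ℝ) 1))
    (hγint : IntegrableOn γ (Ioo (0:ℝ) 1)) :
    Tendsto (fun n : ℕ =>
        (1 / Real.sqrt n) * ∑ i ∈ Finset.Icc 1 n, γ ((i : ℝ) / (n + 1))
          - Real.sqrt n * ∫ x in Ioo (0:ℝ) 1, γ x)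
      atTop (𝓝 0) := by
  obtain ⟨C, hC0, hC⟩ := RSQC_key γ γ' hderiv hcont hint hγint
  set I := ∫ x in Ioo (0:ℝ) 1, γ x with hIdef
  have htend : Tendsto (fun n : ℕ => 2*C*(n:ℝ) ^ (-(1/4):ℝ)) atTop (𝓝 0) := by
    have h1 := (tendsto_rpow_neg_atTop (by norm_num : (0:ℝ) < 1/4)).comp
      (tendsto_natCast_atTop_atTop (R := ℝ))
    have h2 := h1.const_mul (2*C)
    simpa using h2
  apply squeeze_zero_norm' ?_ htend
  filter_upwards [eventually_ge_atTop 1] with n hn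
  have hn1 : (1:ℝ) ≤ (n:ℝ) := by exact_mod_cast hn
  have hn0 : (0:ℝ) < (n:ℝ) := by linarith
  have hs0 : 0 < Real.sqrt n := Real.sqrt_pos.mpr hn0
  have hsne : Real.sqrt (n:ℝ) ≠ 0 := ne_of_gt hs0
  have hss : Real.sqrt (n:ℝ) * Real.sqrt (n:ℝ) = (n:ℝ) := Real.mul_self_sqrt hn0.le
  set S := ∑ i ∈ Finset.Icc 1 n, γ ((i : ℝ) / ((n:ℝ) + 1)) with hSdef
  have hExpr : (1 / Real.sqrt n) * S - Real.sqrt n * I = (S - (n:ℝ)*I)/Real.sqrt n := by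
    rw [eq_div_iff hsne]
    have hinv : (1 / Real.sqrt (n:ℝ)) * Real.sqrt (n:ℝ) = 1 := by field_simp
    linear_combination S * hinv - I * hss
  have hkey := hC n hn
  have hnp : ((n:ℝ)+1) ^ ((1:ℝ)/4) ≤ 2 * (n:ℝ) ^ ((1:ℝ)/4) := by
    calc ((n:ℝ)+1) ^ ((1:ℝ)/4) ≤ (2*(n:ℝ)) ^ ((1:ℝ)/4) :=
          Real.rpow_le_rpow (by linarith) (by linarith) (by norm_num)
      _ = 2 ^ ((1:ℝ)/4) * (n:ℝ) ^ ((1:ℝ)/4) := Real.mul_rpow (by norm_num) hn0.le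
      _ ≤ 2 * (n:ℝ) ^ ((1:ℝ)/4) := by
          have h24 : (2:ℝ) ^ ((1:ℝ)/4) ≤ 2 := by
            have := Real.rpow_le_rpow_of_exponent_le (by norm_num : (1:ℝ) ≤ 2)
              (by norm_num : (1:ℝ)/4 ≤ 1)
            rwa [Real.rpow_one] at this
          have : 0 ≤ (n:ℝ) ^ ((1:ℝ)/4) := Real.rpow_nonneg hn0.le _
          nlinarith
  have hnum : |S - (n:ℝ)*I| ≤ 2*C*(n:ℝ) ^ ((1:ℝ)/4) := by
    calc |S - (n:ℝ)*I| ≤ C * ((n:ℝ)+1) ^ ((1:ℝ)/4) := hkey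
      _ ≤ C * (2 * (n:ℝ) ^ ((1:ℝ)/4)) := mul_le_mul_of_nonneg_left hnp hC0
      _ = 2*C*(n:ℝ) ^ ((1:ℝ)/4) := by ring
  have hsqrt : Real.sqrt (n:ℝ) = (n:ℝ) ^ ((1:ℝ)/2) := Real.sqrt_eq_rpow (n:ℝ)
  rw [Real.norm_eq_abs, hExpr, abs_div, abs_of_pos hs0, div_le_iff₀ hs0]
  calc |S - (n:ℝ)*I| ≤ 2*C*(n:ℝ) ^ ((1:ℝ)/4) := hnum
    _ = 2*C*(n:ℝ) ^ (-(1/4):ℝ) * Real.sqrt (n:ℝ) := by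
        rw [hsqrt, mul_assoc, mul_assoc, ← Real.rpow_add hn0]
        norm_num
        ring
end

section
/- With g_n defined as the piecewise function g_n(y) = y − (i−1)/n for (i−1)/n ≤ y < i/(n+1) and g_n(y) = y − i/n for i/(n+1) ≤ y < i/n (1 ≤ i ≤ n), one has n ∫₀¹ g_n(y)² (y(1−y))^{−3/2} dy → 0 as n → ∞. -/
open MeasureTheory Set Filter Topology

noncomputable def psiAux (r y : ℝ) : ℝ := (min y r) ^ 2 * y ^ (-(3:ℝ)/2)

lemma psiAux_nonneg {r y : ℝ} (hy : 0 ≤ y) : 0 ≤ psiAux r y :=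
  mul_nonneg (sq_nonneg _) (Real.rpow_nonneg hy _)

lemma psiAux_eq_left {r : ℝ} (hr : 0 < r) :
    EqOn (psiAux r) (fun y => y ^ ((1:ℝ)/2)) (uIcc 0 r) := by
  intro y hy
  rw [uIcc_of_le hr.le] at hy
  rcases eq_or_lt_of_le hy.1 with h0 | h0
  · simp [psiAux, ← h0, Real.zero_rpow]
  · have hmin : min y r = y := min_eq_left hy.2
    simp only [psiAux, hmin]
    rw [← Real.rpow_natCast y 2, ← Real.rpow_add h0]
    norm_num

lemma psiAux_eq_right {r : ℝ} (hr1 : r ≤ 1) :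
    EqOn (psiAux r) (fun y => r ^ 2 * y ^ (-(3:ℝ)/2)) (uIcc r 1) := by
  intro y hy
  rw [uIcc_of_le hr1] at hy
  simp [psiAux, min_eq_right hy.1]

lemma psiAux_ii_left {r : ℝ} (hr : 0 < r) :
    IntervalIntegrable (psiAux r) volume 0 r := by
  apply (intervalIntegral.intervalIntegrable_rpow' (r := (1:ℝ)/2) (by norm_num)).congr
  rw [uIoc_of_le hr.le]
  exact
    fun y hy => ((psiAux_eq_left hr) (by rw [uIcc_of_le hr.le]; exact ⟨hy.1.le, hy.2⟩)).symm

lemma psiAux_ii_right {r : ℝ} (hr0 : 0 < r) (hr1 : r ≤ 1) :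
    IntervalIntegrable (psiAux r) volume r 1 := by
  have h0 : (0:ℝ) ∉ uIcc r 1 := by
    rw [uIcc_of_le hr1]
    intro h
    exact absurd h.1 (by linarith)
  apply ((intervalIntegral.intervalIntegrable_rpow (r := -(3:ℝ)/2) (Or.inr h0)).const_mul
    (r ^ 2)).congr
  exact
    fun y hy => ((psiAux_eq_right hr1) (uIoc_subset_uIcc hy)).symm

lemma psiAux_integral_left {r : ℝ} (hr : 0 < r) :
    ∫ y in (0:ℝ)..r, psiAux r y = 2/3 * r ^ ((3:ℝ)/2) := by
  rw [intervalIntegral.integral_congr (psiAux_eq_left hr),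
    integral_rpow (Or.inl (by norm_num))]
  rw [Real.zero_rpow (by norm_num)]
  norm_num
  ring

lemma psiAux_integral_right {r : ℝ} (hr0 : 0 < r) (hr1 : r ≤ 1) :
    ∫ y in r..(1:ℝ), psiAux r y ≤ 2 * r ^ ((3:ℝ)/2) := by
  have h0 : (0:ℝ) ∉ uIcc r 1 := by
    rw [uIcc_of_le hr1]
    intro h
    exact absurd h.1 (by linarith)
  rw [intervalIntegral.integral_congr (psiAux_eq_right hr1),
    intervalIntegral.integral_const_mul,
    integral_rpow (Or.inr ⟨by norm_num, h0⟩)]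
  have key : r ^ (2:ℕ) * r ^ (-(1:ℝ)/2) = r ^ ((3:ℝ)/2) := by
    rw [← Real.rpow_natCast r 2, ← Real.rpow_add hr0]
    norm_num
  have h1 : ((1:ℝ)) ^ (-(3:ℝ)/2 + 1) = 1 := Real.one_rpow _
  have he : (-(3:ℝ)/2 + 1) = -(1:ℝ)/2 := by norm_num
  rw [he] at h1 ⊢
  rw [h1]
  have hsq : 0 ≤ r ^ (2:ℕ) := sq_nonneg r
  nlinarith [key, hsq]

lemma psiAux_integral_le {r : ℝ} (hr0 : 0 < r) (hr1 : r ≤ 1) :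
    ∫ y in (0:ℝ)..1, psiAux r y ≤ 3 * r ^ ((3:ℝ)/2) := by
  rw [← intervalIntegral.integral_add_adjacent_intervals (psiAux_ii_left hr0)
    (psiAux_ii_right hr0 hr1)]
  have h1 := psiAux_integral_left hr0
  have h2 := psiAux_integral_right hr0 hr1
  have h3 : 0 ≤ r ^ ((3:ℝ)/2) := Real.rpow_nonneg hr0.le _
  linarith

lemma arith1 {y n i D : ℝ} (hn : 1 ≤ n) (hi1 : 1 ≤ i) (hin : i ≤ n)
    (hC : y * (n + 1) < i) (hD : D * n = i - 1) : y - D ≤ 1 - y := by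
  have hn0 : (0:ℝ) < n := by linarith
  have p2 : 0 ≤ n * (i - y * (n + 1)) := mul_nonneg hn0.le (by linarith)
  have p3 : 0 ≤ n * (n - i) := mul_nonneg hn0.le (by linarith)
  have hD2 : D * n * n = (i - 1) * n := by rw [hD]
  nlinarith [p2, p3, hD2, hD, mul_pos hn0 (by linarith : (0:ℝ) < n + 1)]

/-- The pointwise bound `|g n y| ≤ min(y, 1/n, 1-y)` on `(0,1)`. -/
lemma g_abs_le (g : ℕ → ℝ → ℝ)
    (hg₁ : ∀ n : ℕ, 1 ≤ n → ∀ i : ℕ, 1 ≤ i → i ≤ n → ∀ y : ℝ,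
        ((i : ℝ) - 1) / n ≤ y → y < (i : ℝ) / (n + 1) → g n y = y - ((i : ℝ) - 1) / n)
    (hg₂ : ∀ n : ℕ, 1 ≤ n → ∀ i : ℕ, 1 ≤ i → i ≤ n → ∀ y : ℝ,
        (i : ℝ) / (n + 1) ≤ y → y < (i : ℝ) / n → g n y = y - (i : ℝ) / n)
    (n : ℕ) (hn : 1 ≤ n) {y : ℝ} (hy : y ∈ Ioo (0:ℝ) 1) :
    |g n y| ≤ min y (min ((n:ℝ)⁻¹) (1 - y)) := by
  obtain ⟨hy0, hy1⟩ := hy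
  have hn' : (0:ℝ) < n := by exact_mod_cast hn
  have hn'' : (1:ℝ) ≤ n := by exact_mod_cast hn
  set m : ℤ := ⌊(n:ℝ) * y⌋ with hm
  have hm0 : 0 ≤ m := Int.floor_nonneg.2 (by positivity)
  have hmn : m < (n:ℤ) := by
    apply Int.floor_lt.2
    push_cast
    nlinarith
  set i : ℕ := m.toNat + 1 with hi
  have hiR : (i:ℝ) = (m:ℝ) + 1 := by
    have : ((m.toNat : ℤ) : ℝ) = (m:ℝ) := by rw [Int.toNat_of_nonneg hm0]
    push_cast [hi]
    push_cast at this
    linarith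
  have hi1 : 1 ≤ i := Nat.le_add_left 1 _
  have hin : i ≤ n := by omega
  have hfl : (m:ℝ) ≤ (n:ℝ) * y := Int.floor_le _
  have hfu : (n:ℝ) * y < (m:ℝ) + 1 := Int.lt_floor_add_one _
  have hcomm : (n:ℝ) * y = y * n := mul_comm _ _
  have hyl : ((i:ℝ) - 1) / n ≤ y := by
    rw [div_le_iff₀ hn', hiR]
    linarith
  have hyu : y < (i:ℝ) / n := by
    rw [lt_div_iff₀ hn', hiR]
    linarith
  have A : (i:ℝ) - 1 ≤ y * n := (div_le_iff₀ hn').1 hyl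
  have B : y * n < (i:ℝ) := (lt_div_iff₀ hn').1 hyu
  have hi1' : (1:ℝ) ≤ (i:ℝ) := by exact_mod_cast hi1
  have hin' : (i:ℝ) ≤ (n:ℝ) := by exact_mod_cast hin
  have hn1 : (0:ℝ) < (n:ℝ) + 1 := by linarith
  have hninv : ((n:ℝ)⁻¹) * n = 1 := inv_mul_cancel₀ hn'.ne'
  rcases lt_or_ge y ((i:ℝ) / ((n:ℝ) + 1)) with hc1 | hc2
  · have hgy := hg₁ n hn i hi1 hin y hyl hc1
    have C : y * ((n:ℝ) + 1) < (i:ℝ) := (lt_div_iff₀ hn1).1 hc1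
    set D : ℝ := ((i:ℝ) - 1) / n with hD
    have hDn : D * n = (i:ℝ) - 1 := div_mul_cancel₀ _ hn'.ne'
    have hD0 : 0 ≤ D := div_nonneg (by linarith) hn'.le
    rw [hgy, abs_of_nonneg (by linarith)]
    refine le_min (by linarith) (le_min ?_ ?_)
    · have h : (y - D) * n ≤ (n:ℝ)⁻¹ * n := by
        have e : (y - D) * n = y * n - D * n := by ring
        rw [e, hDn, hninv]
        linarith
      exact le_of_mul_le_mul_right h hn'
    · exact arith1 hn'' hi1' hin' C hDn
  · have hgy := hg₂ n hn i hi1 hin y hc2 hyu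
    have C' : (i:ℝ) ≤ y * ((n:ℝ) + 1) := (div_le_iff₀ hn1).1 hc2
    set E : ℝ := (i:ℝ) / n with hE
    have hEn : E * n = (i:ℝ) := div_mul_cancel₀ _ hn'.ne'
    have hyE : y < E := hyu
    rw [hgy, abs_of_nonpos (by linarith), neg_sub]
    refine le_min ?_ (le_min ?_ ?_)
    · have hyyn : y ≤ y * n := le_mul_of_one_le_right hy0.le hn''
      have h : (E - y) * n ≤ y * n := by
        have e : (E - y) * n = E * n - y * n := by ring
        rw [e, hEn]
        linarith
      exact le_of_mul_le_mul_right h hn'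
    · have h : (E - y) * n ≤ (n:ℝ)⁻¹ * n := by
        have e : (E - y) * n = E * n - y * n := by ring
        rw [e, hEn, hninv]
        linarith
      exact le_of_mul_le_mul_right h hn'
    · have h : E * n ≤ 1 * n := by
        rw [hEn, one_mul]
        exact hin'
      have := le_of_mul_le_mul_right h hn'
      linarith

/-- For the sawtooth functions `g_n` (with `g_n(y) = y − (i−1)/n` on `[(i−1)/n, i/(n+1))` and
`g_n(y) = y − i/n` on `[i/(n+1), i/n)`, `1 ≤ i ≤ n`), one has
`n ∫₀¹ g_n(y)² (y(1−y))^{−3/2} dy → 0` as `n → ∞`. -/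
theorem sawtooth_weighted_integral_tendsto_zero
    (g : ℕ → ℝ → ℝ)
    (hg₁ : ∀ n : ℕ, 1 ≤ n → ∀ i : ℕ, 1 ≤ i → i ≤ n → ∀ y : ℝ,
        ((i : ℝ) - 1) / n ≤ y → y < (i : ℝ) / (n + 1) → g n y = y - ((i : ℝ) - 1) / n)
    (hg₂ : ∀ n : ℕ, 1 ≤ n → ∀ i : ℕ, 1 ≤ i → i ≤ n → ∀ y : ℝ,
        (i : ℝ) / (n + 1) ≤ y → y < (i : ℝ) / n → g n y = y - (i : ℝ) / n) :
    Tendsto (fun n : ℕ =>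
        (n : ℝ) * ∫ y in Ioo (0:ℝ) 1, (g n y) ^ 2 * (y * (1 - y)) ^ (-(3:ℝ)/2))
      atTop (𝓝 0) := by
  have key : ∀ n : ℕ, 1 ≤ n →
      ‖(n : ℝ) * ∫ y in Ioo (0:ℝ) 1, (g n y) ^ 2 * (y * (1 - y)) ^ (-(3:ℝ)/2)‖
        ≤ 24 * (n:ℝ) ^ (-(1:ℝ)/2) := by
    intro n hn
    have hn' : (0:ℝ) < n := by exact_mod_cast hn
    have hn'' : (1:ℝ) ≤ n := by exact_mod_cast hn
    set r : ℝ := (n:ℝ)⁻¹ with hrdef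
    have hr0 : 0 < r := by positivity
    have hr1 : r ≤ 1 := by
      rw [hrdef]
      exact inv_le_one_of_one_le₀ hn''
    set F : ℝ → ℝ := fun y => 4 * psiAux r y + 4 * psiAux r (1 - y) with hF
    have hii1 : IntervalIntegrable (psiAux r) volume 0 1 :=
      (psiAux_ii_left hr0).trans (psiAux_ii_right hr0 hr1)
    have hii2 : IntervalIntegrable (fun y => psiAux r (1 - y)) volume 0 1 := by
      have h := (hii1.comp_sub_left 1).symm
      simpa using h
    have hiiF : IntervalIntegrable F volume 0 1 := (hii1.const_mul 4).add (hii2.const_mul 4)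
    have hFint : IntegrableOn F (Ioo 0 1) :=
      ((intervalIntegrable_iff_integrableOn_Ioc_of_le zero_le_one).1 hiiF).mono_set
        Ioo_subset_Ioc_self
    have hFval : ∫ y in Ioo (0:ℝ) 1, F y ≤ 24 * r ^ ((3:ℝ)/2) := by
      have h1 : ∫ y in Ioo (0:ℝ) 1, F y = ∫ y in (0:ℝ)..1, F y := by
        rw [intervalIntegral.integral_of_le zero_le_one, ← integral_Ioc_eq_integral_Ioo]
      rw [h1, hF]
      rw [intervalIntegral.integral_add (hii1.const_mul 4) (hii2.const_mul 4),
        intervalIntegral.integral_const_mul, intervalIntegral.integral_const_mul,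
        intervalIntegral.integral_comp_sub_left (psiAux r) 1]
      simp only [sub_zero, sub_self]
      have h2 := psiAux_integral_le hr0 hr1
      linarith
    have hpt : ∀ y ∈ Ioo (0:ℝ) 1,
        ‖(g n y) ^ 2 * (y * (1 - y)) ^ (-(3:ℝ)/2)‖ ≤ F y := by
      intro y hy
      obtain ⟨hy0, hy1⟩ := hy
      have h1y : (0:ℝ) < 1 - y := by linarith
      have habs := g_abs_le g hg₁ hg₂ n hn ⟨hy0, hy1⟩
      set mv : ℝ := min y (min ((n:ℝ)⁻¹) (1 - y)) with hmv
      have hm0 : 0 ≤ mv := le_min hy0.le (le_min (by positivity) h1y.le)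
      have hw : (y * (1 - y)) ^ (-(3:ℝ)/2) = y ^ (-(3:ℝ)/2) * (1 - y) ^ (-(3:ℝ)/2) :=
        Real.mul_rpow hy0.le h1y.le
      have hwpos : 0 ≤ (y * (1 - y)) ^ (-(3:ℝ)/2) := Real.rpow_nonneg (by positivity) _
      rw [Real.norm_eq_abs, abs_of_nonneg (mul_nonneg (sq_nonneg _) hwpos)]
      have hg2 : (g n y) ^ 2 ≤ mv ^ 2 := by
        rw [← sq_abs]
        exact pow_le_pow_left₀ (abs_nonneg _) habs 2
      have step1 : (g n y) ^ 2 * (y * (1 - y)) ^ (-(3:ℝ)/2)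
          ≤ mv ^ 2 * (y * (1 - y)) ^ (-(3:ℝ)/2) := mul_le_mul_of_nonneg_right hg2 hwpos
      refine step1.trans ?_
      rw [hw]
      have hy_w : 0 ≤ y ^ (-(3:ℝ)/2) := Real.rpow_nonneg hy0.le _
      have h1y_w : 0 ≤ (1 - y) ^ (-(3:ℝ)/2) := Real.rpow_nonneg h1y.le _
      have hfour : ∀ z : ℝ, (1:ℝ)/2 ≤ z → z ^ (-(3:ℝ)/2) ≤ 4 := by
        intro z hz
        have hz0 : (0:ℝ) < z := by linarith
        have he : (-(3:ℝ)/2) = -((3:ℝ)/2) := by norm_num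
        rw [he, Real.rpow_neg hz0.le]
        have hge : ((1:ℝ)/2) ^ ((3:ℝ)/2) ≤ z ^ ((3:ℝ)/2) :=
          Real.rpow_le_rpow (by norm_num) hz (by norm_num)
        have hq : (1/4:ℝ) ≤ ((1:ℝ)/2) ^ ((3:ℝ)/2) := by
          have h2 : ((1:ℝ)/2) ^ ((2:ℕ):ℝ) ≤ ((1:ℝ)/2) ^ ((3:ℝ)/2) :=
            Real.rpow_le_rpow_of_exponent_ge (by norm_num) (by norm_num)
              (by push_cast; norm_num)
          rw [Real.rpow_natCast] at h2
          norm_num at h2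
          linarith
        have hpos : (0:ℝ) < z ^ ((3:ℝ)/2) := Real.rpow_pos_of_pos hz0 _
        calc (z ^ ((3:ℝ)/2))⁻¹ ≤ (1/4:ℝ)⁻¹ := inv_anti₀ (by norm_num) (by linarith)
          _ = 4 := by norm_num
      have hpsi1 : 0 ≤ psiAux r y := psiAux_nonneg hy0.le
      have hpsi2 : 0 ≤ psiAux r (1 - y) := psiAux_nonneg h1y.le
      rcases le_or_gt y (1/2) with hhalf | hhalf
      · have h4 : (1 - y) ^ (-(3:ℝ)/2) ≤ 4 := hfour _ (by linarith)
        have hm2 : mv ^ 2 ≤ (min y r) ^ 2 := by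
          apply pow_le_pow_left₀ hm0
          exact le_min (min_le_left _ _) ((min_le_right _ _).trans (min_le_left _ _))
        have hstep : mv ^ 2 * (y ^ (-(3:ℝ)/2) * (1 - y) ^ (-(3:ℝ)/2))
            ≤ (min y r) ^ 2 * (y ^ (-(3:ℝ)/2) * 4) := by
          apply mul_le_mul hm2 (mul_le_mul_of_nonneg_left h4 hy_w) (by positivity) (sq_nonneg _)
        refine hstep.trans ?_
        simp only [hF]
        have : (min y r) ^ 2 * (y ^ (-(3:ℝ)/2) * 4) = 4 * psiAux r y := by
          unfold psiAux; ring
        rw [this]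
        linarith
      · have h4 : y ^ (-(3:ℝ)/2) ≤ 4 := hfour _ (by linarith)
        have hm2 : mv ^ 2 ≤ (min (1 - y) r) ^ 2 := by
          apply pow_le_pow_left₀ hm0
          exact le_min ((min_le_right _ _).trans (min_le_right _ _))
            ((min_le_right _ _).trans (min_le_left _ _))
        have hstep : mv ^ 2 * (y ^ (-(3:ℝ)/2) * (1 - y) ^ (-(3:ℝ)/2))
            ≤ (min (1 - y) r) ^ 2 * (4 * (1 - y) ^ (-(3:ℝ)/2)) := by
          apply mul_le_mul hm2 (mul_le_mul_of_nonneg_right h4 h1y_w) (by positivity) (sq_nonneg _)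
        refine hstep.trans ?_
        simp only [hF]
        have : (min (1 - y) r) ^ 2 * (4 * (1 - y) ^ (-(3:ℝ)/2)) = 4 * psiAux r (1 - y) := by
          unfold psiAux; ring
        rw [this]
        linarith
    have hae : ∀ᵐ y ∂(volume.restrict (Ioo (0:ℝ) 1)),
        ‖(g n y) ^ 2 * (y * (1 - y)) ^ (-(3:ℝ)/2)‖ ≤ F y :=
      ae_restrict_of_forall_mem measurableSet_Ioo hpt
    have hnorm := norm_integral_le_of_norm_le hFint hae
    have hid : (n:ℝ) * (24 * r ^ ((3:ℝ)/2)) = 24 * (n:ℝ) ^ (-(1:ℝ)/2) := by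
      have h1 : r ^ ((3:ℝ)/2) = (n:ℝ) ^ ((-1:ℝ) * ((3:ℝ)/2)) := by
        rw [hrdef, ← Real.rpow_neg_one (n:ℝ), ← Real.rpow_mul hn'.le]
      rw [h1]
      nth_rewrite 1 [show (n:ℝ) = (n:ℝ) ^ (1:ℝ) from (Real.rpow_one _).symm]
      rw [show (24:ℝ) * (n:ℝ) ^ (-(1:ℝ)/2) = (n:ℝ) ^ (-(1:ℝ)/2) * 24 from mul_comm _ _,
        show (n:ℝ) ^ (1:ℝ) * ((24:ℝ) * (n:ℝ) ^ ((-1:ℝ) * ((3:ℝ)/2)))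
          = (n:ℝ) ^ (1:ℝ) * (n:ℝ) ^ ((-1:ℝ) * ((3:ℝ)/2)) * 24 from by ring,
        ← Real.rpow_add hn']
      norm_num
    calc ‖(n : ℝ) * ∫ y in Ioo (0:ℝ) 1, (g n y) ^ 2 * (y * (1 - y)) ^ (-(3:ℝ)/2)‖
        = (n:ℝ) * ‖∫ y in Ioo (0:ℝ) 1, (g n y) ^ 2 * (y * (1 - y)) ^ (-(3:ℝ)/2)‖ := by
          rw [norm_mul, Real.norm_eq_abs (n:ℝ), abs_of_nonneg hn'.le]
      _ ≤ (n:ℝ) * (24 * r ^ ((3:ℝ)/2)) :=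
          mul_le_mul_of_nonneg_left (hnorm.trans hFval) hn'.le
      _ = 24 * (n:ℝ) ^ (-(1:ℝ)/2) := hid
  have htend : Tendsto (fun n : ℕ => 24 * (n:ℝ) ^ (-(1:ℝ)/2)) atTop (𝓝 0) := by
    have h1 : Tendsto (fun x : ℝ => x ^ (-((1:ℝ)/2))) atTop (𝓝 0) :=
      tendsto_rpow_neg_atTop (by norm_num)
    have h2 : Tendsto (fun n : ℕ => ((n:ℝ)) ^ (-((1:ℝ)/2))) atTop (𝓝 0) :=
      h1.comp tendsto_natCast_atTop_atTop
    have h3 := h2.const_mul (24:ℝ)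
    rw [mul_zero] at h3
    convert h3 using 2 with n
    norm_num
  apply squeeze_zero_norm' _ htend
  filter_upwards [eventually_ge_atTop 1] with n hn using key n hn
end

section
/- Let e_1, e_2, … be i.i.d. exponential random variables with mean 1 and S_i = e_1 + ⋯ + e_i. Then M := inf_{1 ≤ i ≤ n < ∞} (S_i/i)/(S_{n+1}/(n+1)) satisfies P(M > 0) = 1. -/
open MeasureTheory ProbabilityTheory Set Filter

lemma expMeasure_one_Iic_zero : expMeasure 1 (Iic 0) = 0 := by
  have h1 : expMeasure 1 (Iic (0 : ℝ)) = ∫⁻ y in Iic (0 : ℝ), exponentialPDF 1 y := by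
    rw [expMeasure, gammaMeasure, withDensity_apply _ measurableSet_Iic]
    rfl
  rw [h1, lintegral_exponentialPDF_eq_antiDeriv one_pos 0]
  simp

set_option maxHeartbeats 1000000 in
lemma integrable_id_expMeasure_one : Integrable id (expMeasure 1) := by
  have hmeas : Measurable (exponentialPDF 1) :=
    (measurable_exponentialPDFReal 1).ennreal_ofReal
  have hne : ∀ᵐ x ∂(volume : Measure ℝ), exponentialPDF 1 x < ⊤ :=
    Filter.Eventually.of_forall fun x => ENNReal.ofReal_lt_top
  have hpdf : gammaPDF 1 1 = exponentialPDF 1 := by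
    funext x
    simp [gammaPDF, exponentialPDF, exponentialPDFReal]
  have h1 : expMeasure 1 = (volume : Measure ℝ).withDensity (exponentialPDF 1) := by
    rw [expMeasure, gammaMeasure, hpdf]
  rw [h1, integrable_withDensity_iff hmeas hne]
  have key : IntegrableOn (fun x : ℝ => Real.exp (-x) * x ^ ((2 : ℝ) - 1)) (Ioi 0) :=
    Real.GammaIntegral_convergent (by norm_num : (0:ℝ) < 2)
  have key2 : IntegrableOn (fun x : ℝ => x * (exponentialPDF 1 x).toReal) (Ioi 0) := by
    apply key.congr_fun _ measurableSet_Ioi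
    intro x hx
    simp only [mem_Ioi] at hx
    show Real.exp (-x) * x ^ ((2:ℝ) - 1) = x * (exponentialPDF 1 x).toReal
    rw [exponentialPDF_of_nonneg hx.le, ENNReal.toReal_ofReal (by positivity)]
    rw [show ((2:ℝ) - 1) = 1 by norm_num, Real.rpow_one]
    ring
  have key3 : IntegrableOn (fun x : ℝ => x * (exponentialPDF 1 x).toReal) (Iic 0) := by
    apply (integrableOn_zero (ε' := ℝ)).congr_fun _ measurableSet_Iic
    intro x hx
    simp only [mem_Iic] at hx
    show (0:ℝ) = x * (exponentialPDF 1 x).toReal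
    rcases lt_or_eq_of_le hx with hx | hx
    · rw [exponentialPDF_of_neg hx]; simp
    · simp [hx]
  have h2 := key3.union key2
  rw [Iic_union_Ioi] at h2
  exact integrableOn_univ.mp h2

lemma integral_id_expMeasure_one_pos : 0 < ∫ x, x ∂(expMeasure 1) := by
  have hnn : 0 ≤ᵐ[expMeasure 1] (id : ℝ → ℝ) := by
    rw [Filter.EventuallyLE, ae_iff]
    refine measure_mono_null ?_ expMeasure_one_Iic_zero
    intro x hx
    simp only [mem_setOf_eq, id_eq, Pi.zero_apply, not_le] at hx
    exact le_of_lt hx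
  have : IsProbabilityMeasure (expMeasure 1) := isProbabilityMeasure_expMeasure one_pos
  rw [show (fun x : ℝ => x) = id from rfl,
    integral_pos_iff_support_of_nonneg_ae hnn integrable_id_expMeasure_one]
  have hsupp : Function.support (id : ℝ → ℝ) = {(0:ℝ)}ᶜ := by
    ext x; simp [Function.mem_support]
  rw [hsupp, measure_compl (measurableSet_singleton 0) (measure_ne_top _ _)]
  have h0 : expMeasure 1 {(0:ℝ)} = 0 :=
    measure_mono_null (by simp) expMeasure_one_Iic_zero
  simp [h0]

/-- A sequence tending to a positive limit, positive from index 1 on, is bounded below by a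
positive constant from index 1 on, and bounded above. -/
lemma seq_bounds (f : ℕ → ℝ) (μ : ℝ) (hμ : 0 < μ) (hf : Filter.Tendsto f atTop (nhds μ))
    (hpos : ∀ i, 1 ≤ i → 0 < f i) :
    ∃ c > 0, ∃ C : ℝ, (∀ i, 1 ≤ i → c ≤ f i) ∧ ∀ n, f n ≤ C := by
  obtain ⟨C, hC⟩ := hf.bddAbove_range
  have hev : ∀ᶠ n in atTop, μ / 2 < f n :=
    hf.eventually (eventually_gt_nhds (by linarith))
  obtain ⟨N, hN⟩ := eventually_atTop.mp hev
  set F : Finset ℝ := insert (μ / 2) ((Finset.Icc 1 N).image f) with hF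
  have hFne : F.Nonempty := ⟨μ / 2, Finset.mem_insert_self _ _⟩
  refine ⟨F.min' hFne, ?_, C, ?_, fun n => hC ⟨n, rfl⟩⟩
  · rcases Finset.mem_insert.mp (F.min'_mem hFne) with h | h
    · linarith [h]
    · obtain ⟨i, hi, hfi⟩ := Finset.mem_image.mp h
      linarith [hfi, hpos i (Finset.mem_Icc.mp hi).1]
  · intro i hi
    by_cases hiN : i ≤ N
    · exact F.min'_le _ (Finset.mem_insert_of_mem
        (Finset.mem_image_of_mem f (Finset.mem_Icc.mpr ⟨hi, hiN⟩)))
    · have h1 : F.min' hFne ≤ μ / 2 := F.min'_le _ (Finset.mem_insert_self _ _)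
      have h2 : μ / 2 < f i := hN i (le_of_not_ge hiN)
      linarith

/-- For `e_1, e_2, …` i.i.d. exponential(1) with partial sums `S_i = e_1 + ⋯ + e_i`, the
infimum `M = inf_{1 ≤ i ≤ n < ∞} (S_i/i)/(S_{n+1}/(n+1))` is almost surely positive. -/
theorem inf_ratio_partial_sums_exponential_pos
    {Ω : Type*} [MeasurableSpace Ω] (P : Measure Ω) [IsProbabilityMeasure P]
    (e : ℕ → Ω → ℝ) (hemeas : ∀ i, Measurable (e i))
    (hexp : ∀ i, Measure.map (e i) P = expMeasure 1)
    (hindep : iIndepFun e P)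
    (S : ℕ → Ω → ℝ) (hS : ∀ i ω, S i ω = ∑ k ∈ Finset.range i, e k ω)
    (M : Ω → ℝ)
    (hM : ∀ ω, M ω = ⨅ p : {p : ℕ × ℕ // 1 ≤ p.1 ∧ p.1 ≤ p.2},
        (S p.1.1 ω / p.1.1) / (S (p.1.2 + 1) ω / (p.1.2 + 1))) :
    P {ω | 0 < M ω} = 1 := by
  -- integrability of e 0
  have hint : Integrable (e 0) P := by
    have h := (integrable_map_measure (μ := P) (f := e 0) (g := (id : ℝ → ℝ))
      (by rw [hexp 0]; exact aestronglyMeasurable_id) (hemeas 0).aemeasurable).mp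
    exact h (by rw [hexp 0]; exact integrable_id_expMeasure_one)
  -- identical distribution
  have hident : ∀ i, IdentDistrib (e i) (e 0) P P := fun i =>
    ⟨(hemeas i).aemeasurable, (hemeas 0).aemeasurable, by rw [hexp i, hexp 0]⟩
  -- pairwise independence
  have hpair : Pairwise (Function.onFun (IndepFun · · P) e) := fun i j hij => hindep.indepFun hij
  -- the mean is positive
  have hmean : 0 < P[e 0] := by
    have : P[e 0] = ∫ x, id x ∂(Measure.map (e 0) P) :=
      (integral_map (hemeas 0).aemeasurable aestronglyMeasurable_id).symm
    rw [this, hexp 0]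
    exact integral_id_expMeasure_one_pos
  -- strong law of large numbers
  have hslln : ∀ᵐ ω ∂P, Filter.Tendsto (fun n : ℕ => (∑ i ∈ Finset.range n, e i ω) / n)
      atTop (nhds (P[e 0])) := strong_law_ae_real e hint hpair hident
  -- a.s. all e k are positive
  have hepos : ∀ᵐ ω ∂P, ∀ k, 0 < e k ω := by
    rw [ae_all_iff]
    intro k
    rw [ae_iff]
    have : {ω | ¬ 0 < e k ω} = e k ⁻¹' (Iic 0) := by
      ext ω; simp [not_lt]
    rw [this, ← Measure.map_apply (hemeas k) measurableSet_Iic, hexp k]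
    exact expMeasure_one_Iic_zero
  -- the pointwise statement
  have hae : ∀ᵐ ω ∂P, 0 < M ω := by
    filter_upwards [hslln, hepos] with ω hω hωe
    set f : ℕ → ℝ := fun n => S n ω / n with hf
    have hft : Filter.Tendsto f atTop (nhds (P[e 0])) := by
      have : f = fun n : ℕ => (∑ i ∈ Finset.range n, e i ω) / n := by
        funext n; rw [hf]; simp [hS]
      rw [this]; exact hω
    have hfpos : ∀ i, 1 ≤ i → 0 < f i := by
      intro i hi
      have hSpos : 0 < S i ω := by
        rw [hS]
        exact Finset.sum_pos (fun k _ => hωe k)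
          (Finset.nonempty_range_iff.mpr (Nat.one_le_iff_ne_zero.mp hi))
      exact div_pos hSpos (by exact_mod_cast hi)
    obtain ⟨c, hc, C, hlow, hhigh⟩ := seq_bounds f _ hmean hft hfpos
    have hCpos : 0 < C := lt_of_lt_of_le hc (le_trans (hlow 1 le_rfl) (hhigh 1))
    have hbound : c / C ≤ M ω := by
      rw [hM]
      have : Nonempty {p : ℕ × ℕ // 1 ≤ p.1 ∧ p.1 ≤ p.2} := ⟨⟨(1, 1), le_refl 1, le_refl 1⟩⟩
      refine le_ciInf fun p => ?_
      obtain ⟨⟨i, n⟩, hi1, hin⟩ := p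
      have h1 : c ≤ f i := hlow i hi1
      have h2 : 0 < f (n + 1) := hfpos (n + 1) (Nat.le_add_left 1 n)
      have h3 : f (n + 1) ≤ C := hhigh (n + 1)
      calc c / C ≤ f i / f (n + 1) :=
            div_le_div₀ (le_trans hc.le h1) h1 h2 h3
        _ = (S i ω / i) / (S (n + 1) ω / (n + 1)) := by
            simp only [hf]; push_cast; try ring_nf
    exact lt_of_lt_of_le (div_pos hc hCpos) hbound
  have : {ω | 0 < M ω} =ᵐ[P] (univ : Set Ω) := by
    rw [ae_eq_univ]
    rw [ae_iff] at hae
    rwa [← compl_setOf] at hae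
  rw [measure_congr this, measure_univ]
end
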